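/- arXiv:2003.02531 — 2 statements merged into one kernel-verified Lean document; each statement's English description precedes it below -/
import Mathlib

section
/- (Framing move, k = d = 2.) Fix ℓ ≥ 2 and a box B = x + [ℓ]². Let M be the set of configurations η such that B is (2,2)-good for η (every row and every column of B contains at least two empty sites, and B contains at least one additional empty site) and in addition the bottom row of B is entirely empty. There exists a T-step move M with domain determined by M, whose transitions are contained in B, such that for every η ∈ M the final configuration M_T η has the left column of B entirely empty (and agrees with η outside B). Moreover, Loss(M) ≤ C ℓ log₂ ℓ and T ≤ C ℓ² for a universal constant C. -/
open MeasureTheory ENNReal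

noncomputable section

namespace KA

open scoped Classical

/-- Sites of the lattice `ℤ^d`. -/
abbrev Site (d : ℕ) := Fin d → ℤ

/-- A configuration: `true` = occupied, `false` = empty. -/
abbrev Config (d : ℕ) := Site d → Bool

variable {d : ℕ}

def origin : Site d := fun _ => 0

def eVec (d : ℕ) (i : Fin d) : Site d := fun j => if j = i then 1 else 0

/-- Nearest neighbours in `ℤ^d`. -/
def adj (x y : Site d) : Prop := (∑ i, |x i - y i|) = 1

/-- The set of (at most `2d`) nearest neighbours of a site. -/
def neighbors (x : Site d) : Finset (Site d) :=
  Finset.image (fun p : Fin d × Bool =>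
    Function.update x p.1 (x p.1 + if p.2 then 1 else -1)) Finset.univ

/-- The Kob-Andersen kinetic constraint `c_{xy}` for parameter `k`:
`x` has at least `k-1` empty neighbours other than `y`, and vice versa. -/
def constraint (k : ℕ) (η : Config d) (x y : Site d) : Prop :=
  k - 1 ≤ ((neighbors x).filter fun z => z ≠ y ∧ η z = false).card ∧
  k - 1 ≤ ((neighbors y).filter fun z => z ≠ x ∧ η z = false).card

/-- `c_{xy}(η)` as a `{0,1}`-valued quantity. -/
def cval (k : ℕ) (η : Config d) (x y : Site d) : ℝ≥0∞ :=
  if constraint k η x y then 1 else 0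

/-- `η^{xy}` : the configuration with the values at `x` and `y` exchanged. -/
def swap (η : Config d) (x y : Site d) : Config d :=
  fun z => if z = x then η y else if z = y then η x else η z

/-- `(τ_y η)(z) = η (z - y)`. -/
def shift (y : Site d) (η : Config d) : Config d := fun z => η (z - y)

/-- A local function depends on finitely many coordinates. -/
def IsLocal (f : Config d → ℝ) : Prop :=
  ∃ S : Finset (Site d), ∀ η η' : Config d, (∀ x ∈ S, η x = η' x) → f η = f η'

def dotZ (u : Fin d → ℝ) (y : Site d) : ℝ := ∑ i, u i * (y i : ℝ)

/-- The environment part `Σ_{x ≠ 0} Σ_{y ∼ x} c_{xy} (f(η^{xy}) - f(η))²`. -/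
def envTerm (k : ℕ) (f : Config d → ℝ) (η : Config d) : ℝ≥0∞ :=
  ∑' p : Site d × Site d,
    if p.1 ≠ origin ∧ adj p.1 p.2 then
      cval k η p.1 p.2 * ENNReal.ofReal ((f (swap η p.1 p.2) - f η) ^ 2)
    else 0

/-- The tagged-particle part `Σ_{y ∼ 0} c_{0y} (u·y + f(τ_y η^{0y}) - f(η))²`. -/
def tagTerm (k : ℕ) (u : Fin d → ℝ) (f : Config d → ℝ) (η : Config d) : ℝ≥0∞ :=
  ∑' y : Site d,
    if adj origin y then
      cval k η origin y *
        ENNReal.ofReal ((dotZ u y + f (shift y (swap η origin y)) - f η) ^ 2)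
    else 0

/-- The variational (Dirichlet) functional `E_u(f)` integrated against `μ₀`. -/
def energy (k : ℕ) (u : Fin d → ℝ) (μ0 : Measure (Config d)) (f : Config d → ℝ) : ℝ≥0∞ :=
  ∫⁻ η, envTerm k f η + tagTerm k u f η ∂μ0

/-- `μ` is the Bernoulli product measure where each site is independently
occupied with probability `1 - q`. -/
def IsBernoulliProduct (q : ℝ) (μ : Measure (Config d)) : Prop :=
  IsProbabilityMeasure μ ∧
  ∀ (S : Finset (Site d)) (ζ : Site d → Bool),
    μ {η | ∀ x ∈ S, η x = ζ x} = ∏ x ∈ S, ENNReal.ofReal (if ζ x then 1 - q else q)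

/-- `μ₀ = μ(· | η(0) = 1)`. -/
def condOcc (μ : Measure (Config d)) : Measure (Config d) :=
  ProbabilityTheory.cond μ {η | η origin = true}

/-- The first standard basis vector of `ℝ^d`. -/
def e1R (d : ℕ) : Fin d → ℝ := fun i => if (i : ℕ) = 0 then 1 else 0

def basisR (d : ℕ) (i : Fin d) : Fin d → ℝ := fun j => if j = i then 1 else 0

/-- The quadratic form `u ↦ inf over local f of E_u(f)`. -/
def Qform (k : ℕ) (μ : Measure (Config d)) (u : Fin d → ℝ) : ℝ≥0∞ :=
  ⨅ f : {f : Config d → ℝ // IsLocal f}, energy k u (condOcc μ) f.1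

/-- The self-diffusion coefficient `D(q) = inf_f E_{e₁}(f)`. -/
def diffCoeff (k : ℕ) (μ : Measure (Config d)) : ℝ≥0∞ := Qform k μ (e1R d)

/-- `expIter n` is the `n`-fold iterated exponential. -/
def expIter : ℕ → ℝ → ℝ
  | 0, x => x
  | n + 1, x => Real.exp (expIter n x)

/-! ### Frameability, goodness, block-connectedness -/

/-- Fill every site outside `V` with a particle. -/
def fillOutside (V : Set (Site d)) (η : Config d) : Config d :=
  fun z => if z ∈ V then η z else true

/-- A single legal KA-`k`f transition inside `V`. -/
def KAStep (k : ℕ) (V : Set (Site d)) (η η' : Config d) : Prop :=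
  ∃ x y, adj x y ∧ x ∈ V ∧ y ∈ V ∧ η x ≠ η y ∧ constraint k η x y ∧ η' = swap η x y

/-- A generalized box with minimal corner `a`, spanning the directions in `E`,
with side length `m` (coordinates outside `E` are frozen at `a`). -/
def genBox (a : Site d) (E : Finset (Fin d)) (m : ℕ) : Set (Site d) :=
  {x | ∀ i, (i ∈ E → a i ≤ x i ∧ x i < a i + m) ∧ (i ∉ E → x i = a i)}

/-- The `k'`-th frame of the generalized box: the union of all of its
`(k'-1)`-dimensional slices passing through the minimal corner. -/
def genFrame (k' : ℕ) (a : Site d) (E : Finset (Fin d)) (m : ℕ) : Set (Site d) :=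
  {x | x ∈ genBox a E m ∧ (E.filter fun i => x i ≠ a i).card ≤ k' - 1}

/-- The generalized box is frameable for `η` : `η` (with the outside filled by
particles) is connected by legal KA-`k'`f transitions inside the box to a
configuration whose `k'`-th frame is empty. -/
def Frameable (k' : ℕ) (a : Site d) (E : Finset (Fin d)) (m : ℕ) (η : Config d) : Prop :=
  ∃ η', Relation.ReflTransGen (KAStep k' (genBox a E m)) (fillOutside (genBox a E m) η) η' ∧
    ∀ x ∈ genFrame k' a E m, η' x = false

def one (d : ℕ) : Site d := fun _ => 1

/-- minimal corner of the box `b + [m]^d`. -/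
def corner (b : Site d) : Site d := fun i => b i + 1

/-- All codimension-one slices of the generalized box are `(k'-1)`-frameable,
for every configuration differing from `η` in at most one site. -/
def SlicesOK (k' : ℕ) (a : Site d) (E : Finset (Fin d)) (m : ℕ) (η : Config d) : Prop :=
  ∀ η' : Config d, {x | η' x ≠ η x}.Subsingleton →
    ∀ i ∈ E, ∀ t : ℕ, t < m →
      Frameable (k' - 1) (Function.update a i (a i + t)) (E.erase i) m η'

/-- A good box: all codimension-one slices frameable (robustly to one spin flip),
with one extra empty site in addition to the ones required. -/
def GoodBox (k' : ℕ) (a : Site d) (E : Finset (Fin d)) (m : ℕ) (η : Config d) : Prop :=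
  SlicesOK k' a E m η ∧
  ∃ x₀ ∈ genBox a E m, η x₀ = false ∧ SlicesOK k' a E m (Function.update η x₀ true)

/-- The length scale `ℓ = ℓ(q)`. -/
def lscale (d k : ℕ) (c q : ℝ) : ℕ :=
  if k = 2 then ⌈c * Real.log (1 / q) * q ^ (-(1 : ℝ) / ((d : ℝ) - 1))⌉₊
  else ⌈c * expIter (k - 2) (q ^ (-(1 : ℝ) / ((d : ℝ) - (k : ℝ) + 1)))⌉₊

/-- The length scale `L = q^{-cℓ}`. -/
def Lscale (q c : ℝ) (ℓ : ℕ) : ℕ := ⌈q ^ (-(c * (ℓ : ℝ)))⌉₊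

/-- One step between adjacent boxes: the base point moves by `±ℓ e_i`. -/
def pathStep (ℓ : ℕ) (b b' : Site d) : Prop :=
  ∃ i : Fin d, ∃ s : Bool,
    b' = fun j => b j + if j = i then (if s then (ℓ : ℤ) else -(ℓ : ℤ)) else 0

/-- A `(d,k)`-super-good path of boxes of side `ℓ` inside the block `v + [L]^d`,
joining `v + [ℓ]^d` to `v + (L-ℓ)e_α + [ℓ]^d`, of length at most `3L`:
all boxes good and at least one frameable. -/
def SuperGoodPath (k ℓ L : ℕ) (v : Site d) (α : Fin d) (η : Config d) : Prop :=
  ∃ n : ℕ, n ≤ 3 * L ∧ ∃ b : ℕ → Site d,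
    b 0 = v ∧
    (b n = fun j => v j + if j = α then (L : ℤ) - (ℓ : ℤ) else 0) ∧
    (∀ m < n, pathStep ℓ (b m) (b (m + 1))) ∧
    (∀ m ≤ n, genBox (corner (b m)) Finset.univ ℓ ⊆ genBox (corner v) Finset.univ L) ∧
    (∀ m ≤ n, GoodBox k (corner (b m)) Finset.univ ℓ η) ∧
    (∃ m ≤ n, Frameable k (corner (b m)) Finset.univ ℓ η)

/-- minimal corner of the external face of the box `genBox a univ m` in
direction `j`, on the positive (`s = true`) or negative side. -/
def faceBase (a : Site d) (m : ℕ) (j : Fin d) (s : Bool) : Site d :=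
  Function.update a j (if s then a j + m else a j - 1)

/-- The face `F` is adjacent to the vertex `v`. -/
def FaceNear (v : Site d) (F : Set (Site d)) : Prop := ∃ x ∈ F, ∀ i, |x i - v i| ≤ 1

/-- All `(d-1)`-dimensional external faces of the box `genBox a univ m` that are
adjacent to the vertex `v` are `(d-1, k-1)`-good. -/
def GoodFacesAt (k : ℕ) (a : Site d) (m : ℕ) (v : Site d) (η : Config d) : Prop :=
  ∀ (j : Fin d) (s : Bool),
    FaceNear v (genBox (faceBase a m j s) (Finset.univ.erase j) m) →
    GoodBox (k - 1) (faceBase a m j s) (Finset.univ.erase j) m η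

/-- The coarse vertices `v` and `v + (L+1)e_α` are `(d,k)`-block-connected. -/
def BlockConnected (k ℓ L : ℕ) (v : Site d) (α : Fin d) (η : Config d) : Prop :=
  SuperGoodPath k ℓ L v α η ∧
  GoodFacesAt k (corner v) ℓ v η ∧
  GoodFacesAt k (corner (fun j => v j + if j = α then (L : ℤ) - (ℓ : ℤ) else 0)) (ℓ + 1)
    (fun j => v j + if j = α then (L : ℤ) + 1 else 0) η

/-! ### `T`-step moves -/

/-- A `T`-step move with domain determined by the set of configurations `M`,
whose transitions are legal KA-`k`f transitions contained in `V`,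
keeping track of the position of a marked particle. -/
structure TStepMove (d k : ℕ) (M : Set (Config d)) (V : Set (Site d)) (T : ℕ) where
  conf : Config d → ℕ → Config d
  pos : Config d → Site d → ℕ → Site d
  conf_zero : ∀ η ∈ M, conf η 0 = η
  pos_zero : ∀ η ∈ M, ∀ z : Site d, η z = true → pos η z 0 = z
  step : ∀ η ∈ M, ∀ z : Site d, η z = true → ∀ t < T,
    (conf η (t + 1) = conf η t ∧ pos η z (t + 1) = pos η z t) ∨
    ∃ x y, adj x y ∧ x ∈ V ∧ y ∈ V ∧ conf η t x = true ∧ conf η t y = false ∧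
      constraint k (conf η t) x y ∧ conf η (t + 1) = swap (conf η t) x y ∧
      pos η z (t + 1) = if pos η z t = x then y else pos η z t

/-- `Loss(M) ≤ K` : at every step, at most `2^K` configurations of the domain
have a common image. -/
def LossBoundedBy {d k : ℕ} {M : Set (Config d)} {V : Set (Site d)} {T : ℕ}
    (mv : TStepMove d k M V T) (K : ℝ) : Prop :=
  ∀ t < T, ∀ η' ∈ M, ∃ S : Finset (Config d),
    {η ∈ M | mv.conf η t = mv.conf η' t ∧ mv.conf η (t + 1) = mv.conf η' (t + 1)} ⊆ ↑S ∧
    (S.card : ℝ) ≤ (2 : ℝ) ^ K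

/-! ### Bond configurations on the coarse lattice -/

/-- A bond configuration on the coarse lattice: the edge `(i, α)` joins the
coarse vertices of index `i` and `i + e_α`. -/
abbrev BondConfig (d : ℕ) := (Site d × Fin d) → Bool

def IsLocalBond (g : BondConfig d → ℝ) : Prop :=
  ∃ S : Finset (Site d × Fin d), ∀ ω ω' : BondConfig d, (∀ e ∈ S, ω e = ω' e) → g ω = g ω'

/-- Translation of a bond configuration by a coarse index vector. -/
def bondShift (v : Site d) (ω : BondConfig d) : BondConfig d := fun e => (ω (e.1 - v, e.2))

/-- Two coarse indices joined by an open bond. -/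
def bondRel (ω : BondConfig d) (i j : Site d) : Prop :=
  (∃ α, j = i + eVec d α ∧ ω (i, α) = true) ∨ (∃ α, i = j + eVec d α ∧ ω (j, α) = true)

/-- The event `{0 ↔ ∞}`: the origin lies in an infinite open cluster. -/
def InfiniteCluster : Set (BondConfig d) :=
  {ω | {j : Site d | Relation.ReflTransGen (bondRel ω) origin j}.Infinite}

/-- The coarse index of the neighbour `± e_α` of the coarse origin. -/
def coarseIdx (d : ℕ) (α : Fin d) (s : Bool) : Site d :=
  if s then eVec d α else -(eVec d α)

/-- The actual lattice vector `±(L+1) e_α` of a coarse neighbour of the origin. -/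
def coarseVecZ (d L : ℕ) (α : Fin d) (s : Bool) : Site d :=
  fun j => ((L : ℤ) + 1) * coarseIdx d α s j

/-- Indicator of the bond between the coarse origin and its neighbour `± e_α`. -/
def edgeInd (ω : BondConfig d) (α : Fin d) (s : Bool) : ℝ≥0∞ :=
  if (if s then ω (origin, α) else ω (-(eVec d α), α)) = true then 1 else 0

/-- The auxiliary quadratic form `u ↦ u ⬝ D_aux u`. -/
def QauxForm (d L : ℕ) (μstar : Measure (BondConfig d)) (u : Fin d → ℝ) : ℝ≥0∞ :=
  ⨅ g : {g : BondConfig d → ℝ // IsLocalBond g},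
    ∑ α : Fin d, ∑ s : Bool,
      ∫⁻ ω, edgeInd ω α s *
        ENNReal.ofReal (((if s then (1 : ℝ) else -1) * ((L : ℝ) + 1) * u α +
          g.1 (bondShift (coarseIdx d α s) ω) - g.1 ω) ^ 2) ∂μstar

/-- Indicator (on microscopic configurations) that the coarse origin and its
neighbour `± e_α` are block-connected, for an abstract notion `BC`. -/
def microEdgeInd (BC : Site d → Fin d → Config d → Bool) (α : Fin d) (s : Bool)
    (η : Config d) : ℝ≥0∞ :=
  if (if s then BC origin α η else BC (-(eVec d α)) α η) = true then 1 else 0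

/-- The microscopic comparison form
`u ↦ inf_f Σ_{i ∼ 0} μ₀[ η̄_{0i} (u·i + f(τ_i η^{0,i}) - f(η))² ]`. -/
def microForm (d k L : ℕ) (BC : Site d → Fin d → Config d → Bool)
    (μ0 : Measure (Config d)) (u : Fin d → ℝ) : ℝ≥0∞ :=
  ⨅ f : {f : Config d → ℝ // IsLocal f},
    ∑ α : Fin d, ∑ s : Bool,
      ∫⁻ η, microEdgeInd BC α s η *
        ENNReal.ofReal (((if s then (1 : ℝ) else -1) * ((L : ℝ) + 1) * u α +
          f.1 (shift (coarseVecZ d L α s) (swap η origin (coarseVecZ d L α s))) - f.1 η) ^ 2)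
        ∂μ0

/-! ### d = 2 geometry -/

/-- The column `y + {c} × [ℓ]` in `ℤ²`. -/
def col2 (y : Site 2) (c : ℤ) (ℓ : ℕ) : Set (Site 2) :=
  {x | x 0 = y 0 + c ∧ y 1 + 1 ≤ x 1 ∧ x 1 ≤ y 1 + ℓ}

/-- The box `b + [ℓ]²`. -/
def box2 (b : Site 2) (ℓ : ℕ) : Set (Site 2) := genBox (corner b) Finset.univ ℓ

/-- `S` contains at least two empty sites. -/
def TwoEmptyIn (S : Set (Site 2)) (η : Config 2) : Prop :=
  ∃ a ∈ S, ∃ b ∈ S, a ≠ b ∧ η a = false ∧ η b = false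

/-- Every row and every column of the box `b + [ℓ]²` contains at least two
empty sites. -/
def RowsColsOK (b : Site 2) (ℓ : ℕ) (η : Config 2) : Prop :=
  (∀ t : ℕ, 1 ≤ t → t ≤ ℓ → TwoEmptyIn {z | z ∈ box2 b ℓ ∧ z 1 = b 1 + t} η) ∧
  (∀ t : ℕ, 1 ≤ t → t ≤ ℓ → TwoEmptyIn {z | z ∈ box2 b ℓ ∧ z 0 = b 0 + t} η)

/-- The box `b + [ℓ]²` is `(2,2)`-good: two empty sites in every row and
column, plus one additional empty site. -/
def Good22 (b : Site 2) (ℓ : ℕ) (η : Config 2) : Prop :=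
  RowsColsOK b ℓ η ∧
  ∃ w ∈ box2 b ℓ, η w = false ∧ RowsColsOK b ℓ (Function.update η w true)

/-! ### Bootstrap percolation -/

/-- The box `[-ℓ, ℓ]^d`. -/
def bigBox (d ℓ : ℕ) : Set (Site d) := {x | ∀ i, |x i| ≤ (ℓ : ℤ)}

/-- One step of `k`-neighbour bootstrap percolation on `[-ℓ,ℓ]^d` (sites
outside the box are left unchanged). -/
def BPstep (k ℓ : ℕ) (η : Config d) : Config d := fun x =>
  if x ∈ bigBox d ℓ then
    (if η x = true ∧
        ((neighbors x).filter fun z => z ∈ bigBox d ℓ ∧ η z = false).card < k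
      then true else false)
  else η x

/-- The limiting configuration of bootstrap percolation. -/
def BPinf (k ℓ : ℕ) (η : Config d) : Config d := fun x =>
  if ∀ t : ℕ, (BPstep k ℓ)^[t] η x = true then true else false

/-- One step along the bootstrap percolation cluster. -/
def bpRel (k ℓ : ℕ) (η : Config d) (a b : Site d) : Prop :=
  adj a b ∧ b ∈ bigBox d ℓ ∧ BPinf k ℓ η b = false

/-- The bootstrap percolation cluster of the origin. -/
def bpCluster (k ℓ : ℕ) (η : Config d) : Set (Site d) :=
  {x | Relation.ReflTransGen (bpRel k ℓ η) origin x}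

def coord0 (x : Site d) : ℤ := if h : 0 < d then x ⟨0, h⟩ else 0

/-- The first coordinate of the rightmost site of the bootstrap percolation
cluster of the origin. -/
def bpRightmost (k ℓ : ℕ) (η : Config d) : ℝ :=
  sSup ((fun x : Site d => (coord0 x : ℝ)) '' bpCluster k ℓ η)

/-- The test function `f`, computed on the restriction to `[-ℓ,ℓ]^d`. -/
def fTest (d k ℓ : ℕ) (η : Config d) : ℝ :=
  bpRightmost k ℓ (fillOutside (bigBox d ℓ) η)

/-- The event `B` : the bootstrap percolation cluster of the origin contains a
site of `ℓ^∞`-norm at least `ℓ - 1`. -/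
def Bevent (k ℓ : ℕ) (η : Config d) : Prop :=
  ∃ x ∈ bpCluster k ℓ η, ∃ i, (ℓ : ℤ) - 1 ≤ |x i|

namespace S9
abbrev E2 := Site 2 × Site 2
def pt (b : Site 2) (c r : ℕ) : Site 2 :=
  fun i => if (i : ℕ) = 0 then b 0 + (c : ℤ) else b 1 + (r : ℤ)
variable {b : Site 2} {ℓ : ℕ}
@[simp] lemma pt_zero (c r : ℕ) : pt b c r 0 = b 0 + (c : ℤ) := by simp [pt]
@[simp] lemma pt_one (c r : ℕ) : pt b c r 1 = b 1 + (r : ℤ) := by simp [pt]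
lemma pt_inj {c r c' r' : ℕ} (h : pt b c r = pt b c' r') : c = c' ∧ r = r' := by
  have h0 := congrFun h 0
  have h1 := congrFun h 1
  simp only [pt_zero, pt_one] at h0 h1
  omega
lemma pt_ne_col {c r c' r' : ℕ} (h : c ≠ c') : pt b c r ≠ pt b c' r' := by
  intro he; exact h (pt_inj he).1
lemma pt_ne_row {c r c' r' : ℕ} (h : r ≠ r') : pt b c r ≠ pt b c' r' := by
  intro he; exact h (pt_inj he).2

lemma mem_box_pt {c r : ℕ} (hc : 1 ≤ c) (hc' : c ≤ ℓ) (hr : 1 ≤ r) (hr' : r ≤ ℓ) :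
    pt b c r ∈ box2 b ℓ := by
  intro i
  refine ⟨fun _ => ?_, fun hi => absurd (Finset.mem_univ i) hi⟩
  fin_cases i <;> simp [corner, pt] <;> omega

lemma eq_pt_of_mem_box {z : Site 2} (hz : z ∈ box2 b ℓ) :
    ∃ c r : ℕ, 1 ≤ c ∧ c ≤ ℓ ∧ 1 ≤ r ∧ r ≤ ℓ ∧ z = pt b c r := by
  have h0 := (hz 0).1 (Finset.mem_univ 0)
  have h1 := (hz 1).1 (Finset.mem_univ 1)
  simp only [corner] at h0 h1
  refine ⟨(z 0 - b 0).toNat, (z 1 - b 1).toNat, ?_, ?_, ?_, ?_, ?_⟩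
  · omega
  · omega
  · omega
  · omega
  · funext i
    fin_cases i <;> simp [pt] <;> omega

/-! neighbors -/

lemma update_mem_neighbors (x : Site 2) (i : Fin 2) (s : Bool) :
    Function.update x i (x i + if s then 1 else -1) ∈ neighbors x :=
  Finset.mem_image.2 ⟨(i, s), Finset.mem_univ _, rfl⟩

lemma mem_nb_right (c r : ℕ) : pt b (c+1) r ∈ neighbors (pt b c r) := by
  have h := update_mem_neighbors (pt b c r) 0 true
  convert h using 1
  funext i
  rcases Fin.exists_fin_two.1 ⟨i, rfl⟩ with h' | h' <;> subst h' <;>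
    simp [Function.update, pt] <;> ring
lemma mem_nb_left (c r : ℕ) : pt b c r ∈ neighbors (pt b (c+1) r) := by
  have h := update_mem_neighbors (pt b (c+1) r) 0 false
  convert h using 1
  funext i
  rcases Fin.exists_fin_two.1 ⟨i, rfl⟩ with h' | h' <;> subst h' <;>
    simp [Function.update, pt] <;> push_cast <;> ring
lemma mem_nb_up (c r : ℕ) : pt b c (r+1) ∈ neighbors (pt b c r) := by
  have h := update_mem_neighbors (pt b c r) 1 true
  convert h using 1
  funext i
  rcases Fin.exists_fin_two.1 ⟨i, rfl⟩ with h' | h' <;> subst h' <;>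
    simp [Function.update, pt] <;> ring
lemma mem_nb_down (c r : ℕ) : pt b c r ∈ neighbors (pt b c (r+1)) := by
  have h := update_mem_neighbors (pt b c (r+1)) 1 false
  convert h using 1
  funext i
  rcases Fin.exists_fin_two.1 ⟨i, rfl⟩ with h' | h' <;> subst h' <;>
    simp [Function.update, pt] <;> push_cast <;> ring

/-! adjacency -/

lemma adj_of_coords {x y : Site 2} (h : |x 0 - y 0| + |x 1 - y 1| = 1) : adj x y := by
  unfold adj
  rw [Fin.sum_univ_two]
  exact h

lemma adj_horiz (c r : ℕ) : adj (pt b c r) (pt b (c+1) r) := by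
  apply adj_of_coords
  simp only [pt_zero, pt_one]
  push_cast
  rw [show b 0 + (c:ℤ) - (b 0 + (c + 1)) = -1 by ring, show b 1 + (r:ℤ) - (b 1 + r) = 0 by ring]
  norm_num
lemma adj_horiz' (c r : ℕ) : adj (pt b (c+1) r) (pt b c r) := by
  apply adj_of_coords
  simp only [pt_zero, pt_one]
  push_cast
  rw [show b 0 + ((c:ℤ) + 1) - (b 0 + c) = 1 by ring, show b 1 + (r:ℤ) - (b 1 + r) = 0 by ring]
  norm_num
lemma adj_vert (c r : ℕ) : adj (pt b c (r+1)) (pt b c r) := by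
  apply adj_of_coords
  simp only [pt_zero, pt_one]
  push_cast
  rw [show b 0 + (c:ℤ) - (b 0 + c) = 0 by ring, show b 1 + ((r:ℤ) + 1) - (b 1 + r) = 1 by ring]
  norm_num

lemma adj_symm {x y : Site 2} (h : adj x y) : adj y x := by
  unfold adj at h ⊢
  rw [Fin.sum_univ_two] at h ⊢
  rw [abs_sub_comm (y 0), abs_sub_comm (y 1)]
  exact h

/-! swap -/

lemma swap_fst (η : Config 2) (x y : Site 2) : swap η x y x = η y := by simp [swap]
lemma swap_snd (η : Config 2) (x y : Site 2) : swap η x y y = η x := by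
  by_cases h : y = x <;> simp [swap, h]
lemma swap_other (η : Config 2) {x y z : Site 2} (hx : z ≠ x) (hy : z ≠ y) :
    swap η x y z = η z := by simp [swap, hx, hy]
lemma swap_eq_comp (η : Config 2) (x y : Site 2) :
    swap η x y = η ∘ ⇑(Equiv.swap x y) := by
  funext z
  simp [swap, Equiv.swap_apply_def]
  split_ifs <;> rfl

lemma swap_comm (η : Config 2) (x y : Site 2) : swap η x y = swap η y x := by
  rw [swap_eq_comp, swap_eq_comp, Equiv.swap_comm]

lemma swap_eq_self {η : Config 2} {x y : Site 2} (h : η x = η y) : swap η x y = η := by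
  funext z
  unfold swap
  by_cases hx : z = x <;> by_cases hy : z = y
  · subst hx; simp [h]
  · subst hx; simp [h]
  · subst hy; simp [hx, h]
  · simp [hx, hy]

/-! constraint via witnesses -/

lemma constraint_of_wit (ζ : Config 2) {x y wx wy : Site 2}
    (hwx : wx ∈ neighbors x) (hwx' : wx ≠ y) (hex : ζ wx = false)
    (hwy : wy ∈ neighbors y) (hwy' : wy ≠ x) (hey : ζ wy = false) :
    constraint 2 ζ x y := by
  constructor
  · show 2 - 1 ≤ _
    have : wx ∈ (neighbors x).filter fun z => z ≠ y ∧ ζ z = false :=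
      Finset.mem_filter.2 ⟨hwx, hwx', hex⟩
    have := Finset.card_pos.2 ⟨wx, this⟩
    omega
  · show 2 - 1 ≤ _
    have : wy ∈ (neighbors y).filter fun z => z ≠ x ∧ ζ z = false :=
      Finset.mem_filter.2 ⟨hwy, hwy', hey⟩
    have := Finset.card_pos.2 ⟨wy, this⟩
    omega

lemma constraint_symm {ζ : Config 2} {x y : Site 2} (h : constraint 2 ζ x y) :
    constraint 2 ζ y x := ⟨h.2, h.1⟩

/-! running a list of exchanges -/

def run (η : Config 2) : List E2 → Config 2
  | [] => η
  | e :: l => run (swap η e.1 e.2) l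

@[simp] lemma run_nil (η : Config 2) : run η [] = η := rfl
@[simp] lemma run_cons (η : Config 2) (e : E2) (l : List E2) :
    run η (e :: l) = run (swap η e.1 e.2) l := rfl

lemma run_append (η : Config 2) (l₁ l₂ : List E2) :
    run η (l₁ ++ l₂) = run (run η l₁) l₂ := by
  induction l₁ generalizing η with
  | nil => rfl
  | cons e l ih => simp [run, ih]

def permOf : List E2 → Equiv.Perm (Site 2)
  | [] => 1
  | e :: l => Equiv.swap e.1 e.2 * permOf l

lemma run_eq_comp (η : Config 2) (l : List E2) : run η l = η ∘ ⇑(permOf l) := by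
  induction l generalizing η with
  | nil => simp [permOf]
  | cons e l ih =>
      rw [run_cons, ih, swap_eq_comp, permOf]
      rw [Equiv.Perm.coe_mul]
      rfl

/-! legality -/

def Legal (b : Site 2) (ℓ : ℕ) (ζ : Config 2) (e : E2) : Prop :=
  adj e.1 e.2 ∧ e.1 ∈ box2 b ℓ ∧ e.2 ∈ box2 b ℓ ∧ constraint 2 ζ e.1 e.2

def LegalRun (b : Site 2) (ℓ : ℕ) : Config 2 → List E2 → Prop
  | _, [] => True
  | ζ, e :: l => Legal b ℓ ζ e ∧ LegalRun b ℓ (swap ζ e.1 e.2) l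

@[simp] lemma legalRun_nil (ζ : Config 2) : LegalRun b ℓ ζ [] := trivial
@[simp] lemma legalRun_cons {ζ : Config 2} {e : E2} {l : List E2} :
    LegalRun b ℓ ζ (e :: l) ↔ Legal b ℓ ζ e ∧ LegalRun b ℓ (swap ζ e.1 e.2) l := Iff.rfl

lemma legalRun_append {ζ : Config 2} {l₁ l₂ : List E2}
    (h₁ : LegalRun b ℓ ζ l₁) (h₂ : LegalRun b ℓ (run ζ l₁) l₂) :
    LegalRun b ℓ ζ (l₁ ++ l₂) := by
  induction l₁ generalizing ζ with
  | nil => exact h₂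
  | cons e l ih =>
      exact ⟨h₁.1, ih h₁.2 h₂⟩

lemma legalRun_get {ζ : Config 2} {l : List E2} (h : LegalRun b ℓ ζ l) :
    ∀ t (ht : t < l.length), Legal b ℓ (run ζ (l.take t)) (l[t]'ht) := by
  induction l generalizing ζ with
  | nil => intro t ht; simp at ht
  | cons e l ih =>
      intro t ht
      cases t with
      | zero => exact h.1
      | succ t =>
          simpa using ih h.2 t (by simpa using ht)

/-! ### the plan lists -/

def lp (b : Site 2) (r : ℕ) : ℕ → List E2
  | 0 => []
  | 1 => []
  | (a+2) => (pt b (a+1) (r+1), pt b (a+2) (r+1)) :: lp b r (a+1)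

def rp (b : Site 2) (r : ℕ) : ℕ → ℕ → List E2
  | _, 0 => []
  | c, (f+1) => (pt b (c+1) (r+1), pt b c (r+1)) :: rp b r (c+1) f

def lc (b : Site 2) (r : ℕ) : ℕ → List E2
  | 0 => []
  | 1 => []
  | (j+2) => (pt b (j+2) (r+1), pt b (j+2) r) :: lc b r (j+1)

lemma phaseA {r : ℕ} (hr : 1 ≤ r) (hru : r + 1 ≤ ℓ) :
    ∀ a, 1 ≤ a → a ≤ ℓ → ∀ ζ : Config 2,
      (∀ c, 1 ≤ c → c ≤ ℓ → ζ (pt b c r) = false) →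
      ζ (pt b a (r+1)) = false →
      LegalRun b ℓ ζ (lp b r a) ∧
      (∀ z : Site 2, (∀ c, 1 ≤ c → c ≤ a → z ≠ pt b c (r+1)) →
         run ζ (lp b r a) z = ζ z) ∧
      run ζ (lp b r a) (pt b 1 (r+1)) = false := by
  intro a
  induction a with
  | zero => omega
  | succ a ih =>
    intro _ ha' ζ hrow hseed
    match a, ih with
    | 0, _ =>
        exact ⟨trivial, fun z _ => rfl, hseed⟩
    | a'+1, ih =>
        have hcol : a' + 2 ≤ ℓ := ha'
        have hLegal : Legal b ℓ ζ (pt b (a'+1) (r+1), pt b (a'+2) (r+1)) := by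
          refine ⟨adj_horiz _ _, mem_box_pt (by omega) (by omega) (by omega) (by omega),
            mem_box_pt (by omega) (by omega) (by omega) (by omega), ?_⟩
          exact constraint_of_wit ζ (mem_nb_down (a'+1) r) (pt_ne_row (by omega))
            (hrow _ (by omega) (by omega))
            (mem_nb_down (a'+2) r) (pt_ne_row (by omega)) (hrow _ (by omega) (by omega))
        set x := pt b (a'+1) (r+1) with hx
        set y := pt b (a'+2) (r+1) with hy
        have hrow' : ∀ c, 1 ≤ c → c ≤ ℓ → (swap ζ x y) (pt b c r) = false := by
          intro c h1 h2
          rw [swap_other ζ (pt_ne_row (by omega)) (pt_ne_row (by omega))]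
          exact hrow c h1 h2
        have hseed' : (swap ζ x y) (pt b (a'+1) (r+1)) = false := by
          rw [← hx, swap_fst]; exact hseed
        obtain ⟨hL, hU, hF⟩ := ih (by omega) (by omega) (swap ζ x y) hrow' hseed'
        refine ⟨⟨hLegal, hL⟩, ?_, hF⟩
        intro z hz
        show run (swap ζ x y) (lp b r (a'+1)) z = ζ z
        rw [hU z (fun c h1 h2 => hz c h1 (by omega))]
        exact swap_other ζ (hz (a'+1) (by omega) (by omega))
          (hz (a'+2) (by omega) (by omega))

lemma phaseB {r : ℕ} (hr : 1 ≤ r) (hru : r + 1 ≤ ℓ) :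
    ∀ f c, 1 ≤ c → c + f = ℓ → ∀ ζ : Config 2,
      (∀ c', 1 ≤ c' → c' ≤ ℓ → ζ (pt b c' r) = false) →
      ζ (pt b c (r+1)) = false →
      LegalRun b ℓ ζ (rp b r c f) ∧
      (∀ z : Site 2, (∀ c', c ≤ c' → c' ≤ ℓ → z ≠ pt b c' (r+1)) →
         run ζ (rp b r c f) z = ζ z) ∧
      run ζ (rp b r c f) (pt b ℓ (r+1)) = false := by
  intro f
  induction f with
  | zero =>
      intro c hc hcl ζ hrow hseed
      have : c = ℓ := by omega
      subst this
      exact ⟨trivial, fun z _ => rfl, hseed⟩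
  | succ f ih =>
      intro c hc hcl ζ hrow hseed
      have hLegal : Legal b ℓ ζ (pt b (c+1) (r+1), pt b c (r+1)) := by
        refine ⟨adj_horiz' _ _, mem_box_pt (by omega) (by omega) (by omega) (by omega),
          mem_box_pt (by omega) (by omega) (by omega) (by omega), ?_⟩
        exact constraint_of_wit ζ (mem_nb_down (c+1) r) (pt_ne_row (by omega))
          (hrow _ (by omega) (by omega))
          (mem_nb_down c r) (pt_ne_row (by omega)) (hrow _ (by omega) (by omega))
      set x := pt b (c+1) (r+1) with hx
      set y := pt b c (r+1) with hy
      have hrow' : ∀ c', 1 ≤ c' → c' ≤ ℓ → (swap ζ x y) (pt b c' r) = false := by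
        intro c' h1 h2
        rw [swap_other ζ (pt_ne_row (by omega)) (pt_ne_row (by omega))]
        exact hrow c' h1 h2
      have hseed' : (swap ζ x y) (pt b (c+1) (r+1)) = false := by
        rw [← hx, swap_fst]; exact hseed
      obtain ⟨hL, hU, hF⟩ := ih (c+1) (by omega) (by omega) (swap ζ x y) hrow' hseed'
      refine ⟨⟨hLegal, hL⟩, ?_, hF⟩
      intro z hz
      show run (swap ζ x y) (rp b r (c+1) f) z = ζ z
      rw [hU z (fun c' h1 h2 => hz c' (by omega) h2)]
      exact swap_other ζ (hz (c+1) (by omega) (by omega)) (hz c (by omega) (by omega))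

lemma phaseC {r : ℕ} (hr : 1 ≤ r) (hru : r + 1 ≤ ℓ) :
    ∀ j, 1 ≤ j → j ≤ ℓ - 1 → ∀ ζ : Config 2,
      (∀ c, 1 ≤ c → c ≤ j → ζ (pt b c r) = false) →
      ζ (pt b 1 (r+1)) = false →
      (∀ c, j + 1 ≤ c → c ≤ ℓ → ζ (pt b c (r+1)) = false) →
      LegalRun b ℓ ζ (lc b r j) ∧
      (∀ z : Site 2, (∀ c, 2 ≤ c → c ≤ j → z ≠ pt b c r ∧ z ≠ pt b c (r+1)) →
         run ζ (lc b r j) z = ζ z) ∧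
      (∀ c, 1 ≤ c → c ≤ ℓ → run ζ (lc b r j) (pt b c (r+1)) = false) ∧
      run ζ (lc b r j) (pt b 1 r) = false := by
  intro j
  induction j with
  | zero => omega
  | succ j ih =>
    intro _ hj ζ hrow h1 htop
    match j, ih with
    | 0, _ =>
        refine ⟨trivial, fun z _ => rfl, ?_, hrow 1 le_rfl le_rfl⟩
        intro c hc1 hcl
        rcases Nat.lt_or_ge c 2 with h | h
        · have : c = 1 := by omega
          subst this; exact h1
        · exact htop c (by omega) hcl
    | j'+1, ih =>
        have hcol : j' + 2 ≤ ℓ - 1 := hj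
        have hℓ : 2 ≤ ℓ := by omega
        have hLegal : Legal b ℓ ζ (pt b (j'+2) (r+1), pt b (j'+2) r) := by
          refine ⟨adj_vert _ _, mem_box_pt (by omega) (by omega) (by omega) (by omega),
            mem_box_pt (by omega) (by omega) (by omega) (by omega), ?_⟩
          exact constraint_of_wit ζ (mem_nb_right (j'+2) (r+1)) (pt_ne_row (by omega))
            (htop _ (by omega) (by omega))
            (mem_nb_left (j'+1) r) (pt_ne_row (by omega)) (hrow _ (by omega) (by omega))
        set x := pt b (j'+2) (r+1) with hx
        set y := pt b (j'+2) r with hy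
        have hrow' : ∀ c, 1 ≤ c → c ≤ j'+1 → (swap ζ x y) (pt b c r) = false := by
          intro c hc1 hc2
          rw [swap_other ζ (pt_ne_row (by omega)) (pt_ne_col (by omega))]
          exact hrow c hc1 (by omega)
        have h1' : (swap ζ x y) (pt b 1 (r+1)) = false := by
          rw [swap_other ζ (pt_ne_col (by omega)) (pt_ne_row (by omega))]
          exact h1
        have htop' : ∀ c, j'+1+1 ≤ c → c ≤ ℓ → (swap ζ x y) (pt b c (r+1)) = false := by
          intro c hc1 hc2
          rcases Nat.lt_or_ge c (j'+3) with h | h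
          · have : c = j'+2 := by omega
            subst this
            rw [← hx, swap_fst, hy]
            exact hrow _ (by omega) (by omega)
          · rw [swap_other ζ (pt_ne_col (by omega)) (pt_ne_row (by omega))]
            exact htop c (by omega) hc2
        obtain ⟨hL, hU, hFull, hDel⟩ :=
          ih (by omega) (by omega) (swap ζ x y) hrow' h1' htop'
        refine ⟨⟨hLegal, hL⟩, ?_, hFull, hDel⟩
        intro z hz
        show run (swap ζ x y) (lc b r (j'+1)) z = ζ z
        rw [hU z (fun c h1c h2c => hz c h1c (by omega))]
        exact swap_other ζ (hz (j'+2) (by omega) (by omega)).2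
          (hz (j'+2) (by omega) (by omega)).1

/-! ### stage -/

def stagePlan (b : Site 2) (ℓ r a bb : ℕ) : List E2 :=
  lp b r a ++ (rp b r bb (ℓ - bb) ++ lc b r (ℓ - 1))

lemma stage {r a bb : ℕ} (hr : 1 ≤ r) (hru : r + 1 ≤ ℓ) (ha : 1 ≤ a)
    (hab : a < bb) (hb : bb ≤ ℓ) (ζ : Config 2)
    (hrow : ∀ c, 1 ≤ c → c ≤ ℓ → ζ (pt b c r) = false)
    (hA : ζ (pt b a (r+1)) = false) (hB : ζ (pt b bb (r+1)) = false) :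
    LegalRun b ℓ ζ (stagePlan b ℓ r a bb) ∧
    (∀ c, 1 ≤ c → c ≤ ℓ → run ζ (stagePlan b ℓ r a bb) (pt b c (r+1)) = false) ∧
    run ζ (stagePlan b ℓ r a bb) (pt b 1 r) = false ∧
    (∀ z : Site 2, (∀ c, 1 ≤ c → c ≤ ℓ → z ≠ pt b c r ∧ z ≠ pt b c (r+1)) →
       run ζ (stagePlan b ℓ r a bb) z = ζ z) := by
  have hl2 : 2 ≤ ℓ := by omega
  obtain ⟨hL1, hU1, hF1⟩ := phaseA hr hru a ha (by omega) ζ hrow hA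
  set ζ₁ := run ζ (lp b r a) with hζ₁
  have hrow₁ : ∀ c, 1 ≤ c → c ≤ ℓ → ζ₁ (pt b c r) = false := by
    intro c h1 h2
    exact (hU1 (pt b c r) (fun c' _ _ => pt_ne_row (by omega))).trans (hrow c h1 h2)
  have hB₁ : ζ₁ (pt b bb (r+1)) = false := by
    exact (hU1 (pt b bb (r+1)) (fun c' h1 h2 => pt_ne_col (by omega))).trans hB
  obtain ⟨hL2, hU2, hF2⟩ := phaseB hr hru (ℓ - bb) bb (by omega) (by omega) ζ₁ hrow₁ hB₁
  set ζ₂ := run ζ₁ (rp b r bb (ℓ - bb)) with hζ₂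
  have hrow₂ : ∀ c, 1 ≤ c → c ≤ ℓ → ζ₂ (pt b c r) = false := by
    intro c h1 h2
    exact (hU2 (pt b c r) (fun c' _ _ => pt_ne_row (by omega))).trans (hrow₁ c h1 h2)
  have h1₂ : ζ₂ (pt b 1 (r+1)) = false := by
    exact (hU2 (pt b 1 (r+1)) (fun c' h1 h2 => pt_ne_col (by omega))).trans hF1
  have htop₂ : ∀ c, (ℓ - 1) + 1 ≤ c → c ≤ ℓ → ζ₂ (pt b c (r+1)) = false := by
    intro c h1 h2
    have : c = ℓ := by omega
    subst this
    exact hF2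
  obtain ⟨hL3, hU3, hFull, hDel⟩ := phaseC hr hru (ℓ - 1) (by omega) le_rfl ζ₂
    (fun c h1 h2 => hrow₂ c h1 (by omega)) h1₂ htop₂
  have hrun : run ζ (stagePlan b ℓ r a bb) = run ζ₂ (lc b r (ℓ - 1)) := by
    rw [stagePlan, run_append, run_append]
  have hLall : LegalRun b ℓ ζ (stagePlan b ℓ r a bb) := by
    refine legalRun_append hL1 (legalRun_append hL2 ?_)
    exact hL3
  refine ⟨hLall, ?_, ?_, ?_⟩
  · intro c h1 h2
    rw [hrun]
    exact hFull c h1 h2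
  · rw [hrun]
    exact hDel
  · intro z hz
    rw [hrun]
    exact (hU3 z (fun c h1 h2 => ⟨(hz c (by omega) (by omega)).1,
        (hz c (by omega) (by omega)).2⟩)).trans
      (((hU2 z (fun c' h1 h2 => (hz c' (by omega) h2).2))).trans
        (hU1 z (fun c' h1 h2 => (hz c' h1 (by omega)).2)))

/-! ### choices and global plan -/

def plansF (b : Site 2) (ℓ : ℕ) (f : ℕ → ℕ × ℕ) : ℕ → List E2
  | 0 => []
  | (k+1) => plansF b ℓ f k ++ stagePlan b ℓ (k+1) (f k).1 (f k).2

def holeCols (b : Site 2) (ℓ : ℕ) (η : Config 2) (u : ℕ) : Finset ℕ :=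
  (Finset.range (ℓ+1)).filter fun c => 1 ≤ c ∧ η (pt b c u) = false

def chA (b : Site 2) (ℓ : ℕ) (η : Config 2) (u : ℕ) : ℕ :=
  if h : (holeCols b ℓ η u).Nonempty then (holeCols b ℓ η u).min' h else 1

def chB (b : Site 2) (ℓ : ℕ) (η : Config 2) (u : ℕ) : ℕ :=
  if h : (holeCols b ℓ η u).Nonempty then (holeCols b ℓ η u).max' h else 1

def chF (b : Site 2) (ℓ : ℕ) (η : Config 2) : ℕ → ℕ × ℕ :=
  fun k => (chA b ℓ η (k+2), chB b ℓ η (k+2))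

def plan (b : Site 2) (ℓ : ℕ) (η : Config 2) : List E2 :=
  plansF b ℓ (chF b ℓ η) (ℓ - 1)

lemma choice_spec (η : Config 2) (hG : RowsColsOK b ℓ η)
    {u : ℕ} (hu2 : 2 ≤ u) (huℓ : u ≤ ℓ) :
    1 ≤ chA b ℓ η u ∧ chA b ℓ η u < chB b ℓ η u ∧ chB b ℓ η u ≤ ℓ ∧
    η (pt b (chA b ℓ η u) u) = false ∧ η (pt b (chB b ℓ η u) u) = false := by
  obtain ⟨x, hx, y, hy, hxy, hex, hey⟩ := hG.1 u (by omega) huℓ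
  obtain ⟨cx, rx, hcx1, hcxl, _, _, hxeq⟩ := eq_pt_of_mem_box hx.1
  obtain ⟨cy, ry, hcy1, hcyl, _, _, hyeq⟩ := eq_pt_of_mem_box hy.1
  have hrx : rx = u := by
    have := hx.2
    rw [hxeq] at this
    simp only [pt_one] at this
    omega
  have hry : ry = u := by
    have := hy.2
    rw [hyeq] at this
    simp only [pt_one] at this
    omega
  rw [hxeq, hrx] at hex
  rw [hyeq, hry] at hey
  have hcxm : cx ∈ holeCols b ℓ η u :=
    Finset.mem_filter.2 ⟨Finset.mem_range.2 (by omega), hcx1, hex⟩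
  have hcym : cy ∈ holeCols b ℓ η u :=
    Finset.mem_filter.2 ⟨Finset.mem_range.2 (by omega), hcy1, hey⟩
  have hne : (holeCols b ℓ η u).Nonempty := ⟨cx, hcxm⟩
  have hAdef : chA b ℓ η u = (holeCols b ℓ η u).min' hne := dif_pos hne
  have hBdef : chB b ℓ η u = (holeCols b ℓ η u).max' hne := dif_pos hne
  have hAmem := (holeCols b ℓ η u).min'_mem hne
  have hBmem := (holeCols b ℓ η u).max'_mem hne
  rw [← hAdef] at hAmem
  rw [← hBdef] at hBmem
  have hA1 := (Finset.mem_filter.1 hAmem).2.1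
  have hAe := (Finset.mem_filter.1 hAmem).2.2
  have hBl : chB b ℓ η u ≤ ℓ := by
    have := Finset.mem_range.1 (Finset.mem_filter.1 hBmem).1
    omega
  have hBe := (Finset.mem_filter.1 hBmem).2.2
  have hcxcy : cx ≠ cy := by
    intro h
    apply hxy
    rw [hxeq, hyeq, h, hrx, hry]
  have h1 : chA b ℓ η u ≤ cx := hAdef ▸ Finset.min'_le _ _ hcxm
  have h2 : chA b ℓ η u ≤ cy := hAdef ▸ Finset.min'_le _ _ hcym
  have h3 : cx ≤ chB b ℓ η u := hBdef ▸ Finset.le_max' _ _ hcxm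
  have h4 : cy ≤ chB b ℓ η u := hBdef ▸ Finset.le_max' _ _ hcym
  exact ⟨hA1, by omega, hBl, hAe, hBe⟩

lemma main_inv (η : Config 2) (hG : RowsColsOK b ℓ η)
    (hbot : ∀ c, 1 ≤ c → c ≤ ℓ → η (pt b c 1) = false) :
    ∀ k, k ≤ ℓ - 1 →
      LegalRun b ℓ η (plansF b ℓ (chF b ℓ η) k) ∧
      (∀ c, 1 ≤ c → c ≤ ℓ → run η (plansF b ℓ (chF b ℓ η) k) (pt b c (k+1)) = false) ∧
      (∀ s, 1 ≤ s → s ≤ k → run η (plansF b ℓ (chF b ℓ η) k) (pt b 1 s) = false) ∧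
      (∀ z : Site 2, (z ∉ box2 b ℓ ∨ b 1 + (k+1) < z 1) →
         run η (plansF b ℓ (chF b ℓ η) k) z = η z) := by
  intro k
  induction k with
  | zero =>
      intro _
      exact ⟨trivial, hbot, fun s h1 h2 => by omega, fun z _ => rfl⟩
  | succ k ih =>
      intro hk
      obtain ⟨hL, hRow, hDel, hAg⟩ := ih (by omega)
      set ζ := run η (plansF b ℓ (chF b ℓ η) k) with hζ
      have hu2 : 2 ≤ k + 2 := by omega
      have huℓ : k + 2 ≤ ℓ := by omega
      obtain ⟨ha1, hab, hbl, hAe, hBe⟩ := choice_spec η hG hu2 huℓ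
      have hptA : (pt b (chA b ℓ η (k+2)) (k+2)) 1 = b 1 + ((k:ℤ)+2) := by
        rw [pt_one]; push_cast; ring
      have hseedA : ζ (pt b (chA b ℓ η (k+2)) (k+2)) = false := by
        exact (hAg _ (Or.inr (by rw [hptA]; push_cast; omega))).trans hAe
      have hptB : (pt b (chB b ℓ η (k+2)) (k+2)) 1 = b 1 + ((k:ℤ)+2) := by
        rw [pt_one]; push_cast; ring
      have hseedB : ζ (pt b (chB b ℓ η (k+2)) (k+2)) = false := by
        exact (hAg _ (Or.inr (by rw [hptB]; push_cast; omega))).trans hBe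
      obtain ⟨sL, sRow, sDel, sU⟩ := stage (r := k+1) (by omega) (by omega) ha1 hab hbl ζ
        hRow hseedA hseedB
      have hplan : plansF b ℓ (chF b ℓ η) (k+1)
          = plansF b ℓ (chF b ℓ η) k ++ stagePlan b ℓ (k+1) (chA b ℓ η (k+2)) (chB b ℓ η (k+2)) := rfl
      have hrun : run η (plansF b ℓ (chF b ℓ η) (k+1))
          = run ζ (stagePlan b ℓ (k+1) (chA b ℓ η (k+2)) (chB b ℓ η (k+2))) := by
        rw [hplan, run_append, hζ]
      refine ⟨?_, ?_, ?_, ?_⟩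
      · rw [hplan]
        exact legalRun_append hL sL
      · intro c h1 h2
        rw [hrun]
        exact sRow c h1 h2
      · intro s h1 h2
        rcases Nat.lt_or_ge s (k+1) with h | h
        · rw [hrun]
          exact (sU _ (fun c hc1 hc2 => ⟨pt_ne_row (by omega), pt_ne_row (by omega)⟩)).trans
            (hDel s h1 (by omega))
        · have : s = k + 1 := by omega
          subst this
          rw [hrun]
          exact sDel
      · intro z hz
        have hz' : ∀ c, 1 ≤ c → c ≤ ℓ → z ≠ pt b c (k+1) ∧ z ≠ pt b c (k+2) := by
          intro c h1 h2
          rcases hz with h | h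
          · refine ⟨fun he => ?_, fun he => ?_⟩
            · rw [he] at h
              exact h (mem_box_pt h1 h2 (by omega) (by omega))
            · rw [he] at h
              exact h (mem_box_pt h1 h2 (by omega) (by omega))
          · refine ⟨fun he => ?_, fun he => ?_⟩
            · rw [he, pt_one] at h
              push_cast at h
              omega
            · rw [he, pt_one] at h
              push_cast at h
              omega
        rw [hrun]
        refine (sU z hz').trans (hAg z ?_)
        rcases hz with h | h
        · exact Or.inl h
        · right; push_cast at h ⊢; omega

/-! ### lengths -/

lemma len_lp (r : ℕ) : ∀ a, (lp b r a).length ≤ a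
  | 0 => by simp [lp]
  | 1 => by simp [lp]
  | (a+2) => by
      have := len_lp r (a+1)
      simp only [lp, List.length_cons]
      omega

lemma len_rp (r : ℕ) : ∀ f c, (rp b r c f).length = f
  | 0, c => by simp [rp]
  | (f+1), c => by
      have := len_rp r f (c+1)
      simp only [rp, List.length_cons]
      omega

lemma len_lc (r : ℕ) : ∀ j, (lc b r j).length ≤ j
  | 0 => by simp [lc]
  | 1 => by simp [lc]
  | (j+2) => by
      have := len_lc r (j+1)
      simp only [lc, List.length_cons]
      omega

lemma chA_le (hl : 1 ≤ ℓ) (η : Config 2) (u : ℕ) : chA b ℓ η u ≤ ℓ := by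
  unfold chA
  split
  · next h =>
      have := (holeCols b ℓ η u).min'_mem h
      have := Finset.mem_range.1 (Finset.mem_filter.1 this).1
      omega
  · omega

lemma chB_le (hl : 1 ≤ ℓ) (η : Config 2) (u : ℕ) : chB b ℓ η u ≤ ℓ := by
  unfold chB
  split
  · next h =>
      have := (holeCols b ℓ η u).max'_mem h
      have := Finset.mem_range.1 (Finset.mem_filter.1 this).1
      omega
  · omega

lemma len_stagePlan {r a bb : ℕ} (ha : a ≤ ℓ) : (stagePlan b ℓ r a bb).length ≤ 3 * ℓ := by
  have h1 := len_lp (b := b) r a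
  have h2 := len_rp (b := b) r (ℓ - bb) bb
  have h3 := len_lc (b := b) r (ℓ - 1)
  simp only [stagePlan, List.length_append]
  omega

lemma len_plan (hl : 1 ≤ ℓ) (η : Config 2) : (plan b ℓ η).length ≤ 3 * ℓ * (ℓ - 1) := by
  suffices h : ∀ k, (plansF b ℓ (chF b ℓ η) k).length ≤ 3 * ℓ * k from h (ℓ - 1)
  intro k
  induction k with
  | zero => simp [plansF]
  | succ k ih =>
      have := len_stagePlan (b := b) (r := k+1) (bb := (chF b ℓ η k).2)
        (a := (chF b ℓ η k).1) (chA_le hl η (k+2))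
      simp only [plansF, List.length_append]
      have : 3 * ℓ * (k + 1) = 3 * ℓ * k + 3 * ℓ := by ring
      omega

/-! ### conf and pos -/

def confT (b : Site 2) (ℓ : ℕ) (η : Config 2) (t : ℕ) : Config 2 :=
  run η ((plan b ℓ η).take t)

def posT (b : Site 2) (ℓ : ℕ) (η : Config 2) (z : Site 2) : ℕ → Site 2
  | 0 => z
  | (t+1) =>
      match (plan b ℓ η)[t]? with
      | none => posT b ℓ η z t
      | some e =>
          if confT b ℓ η t e.1 ≠ confT b ℓ η t e.2 then
            (if posT b ℓ η z t = e.1 then e.2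
             else if posT b ℓ η z t = e.2 then e.1 else posT b ℓ η z t)
          else posT b ℓ η z t

lemma conf_zero' (η : Config 2) : confT b ℓ η 0 = η := rfl

lemma conf_succ_none {η : Config 2} {t : ℕ} (h : (plan b ℓ η)[t]? = none) :
    confT b ℓ η (t+1) = confT b ℓ η t := by
  have hlen : (plan b ℓ η).length ≤ t := List.getElem?_eq_none_iff.1 h
  unfold confT
  rw [List.take_of_length_le hlen, List.take_of_length_le (by omega)]

lemma conf_succ_some {η : Config 2} {t : ℕ} {e : E2} (h : (plan b ℓ η)[t]? = some e) :
    confT b ℓ η (t+1) = swap (confT b ℓ η t) e.1 e.2 := by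
  unfold confT
  rw [List.take_succ, h, run_append]
  rfl

lemma pos_occ (η : Config 2) (z : Site 2) (hz : η z = true) :
    ∀ t, confT b ℓ η t (posT b ℓ η z t) = true := by
  intro t
  induction t with
  | zero => exact hz
  | succ t ih =>
      cases hget : (plan b ℓ η)[t]? with
      | none =>
          rw [conf_succ_none hget]
          simp only [posT, hget]
          exact ih
      | some e =>
          rw [conf_succ_some hget]
          by_cases hne : confT b ℓ η t e.1 = confT b ℓ η t e.2
          · have hpos : posT b ℓ η z (t+1) = posT b ℓ η z t := by
              simp [posT, hget, hne]
            rw [hpos, swap_eq_self hne]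
            exact ih
          · by_cases hp1 : posT b ℓ η z t = e.1
            · have hpos : posT b ℓ η z (t+1) = e.2 := by
                simp [posT, hget, hne, hp1]
              rw [hpos, swap_snd, ← hp1]
              exact ih
            · by_cases hp2 : posT b ℓ η z t = e.2
              · have hpos : posT b ℓ η z (t+1) = e.1 := by
                  simp [posT, hget, hne, hp1, hp2]
                rw [hpos, swap_fst, ← hp2]
                exact ih
              · have hpos : posT b ℓ η z (t+1) = posT b ℓ η z t := by
                  simp [posT, hget, hne, hp1, hp2]
                rw [hpos, swap_other _ hp1 hp2]
                exact ih

/-! ### master legality -/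

lemma master (hl : 2 ≤ ℓ) {η : Config 2} (hG : RowsColsOK b ℓ η)
    (hbot : ∀ c, 1 ≤ c → c ≤ ℓ → η (pt b c 1) = false) :
    LegalRun b ℓ η (plan b ℓ η) :=
  (main_inv η hG hbot (ℓ - 1) le_rfl).1

lemma step_ok (hl : 2 ≤ ℓ) {η : Config 2} (hG : RowsColsOK b ℓ η)
    (hbot : ∀ c, 1 ≤ c → c ≤ ℓ → η (pt b c 1) = false)
    (z : Site 2) (hz : η z = true) (t : ℕ) :
    (confT b ℓ η (t+1) = confT b ℓ η t ∧ posT b ℓ η z (t+1) = posT b ℓ η z t) ∨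
    ∃ x y : Site 2, adj x y ∧ x ∈ box2 b ℓ ∧ y ∈ box2 b ℓ ∧
      confT b ℓ η t x = true ∧ confT b ℓ η t y = false ∧
      constraint 2 (confT b ℓ η t) x y ∧
      confT b ℓ η (t+1) = swap (confT b ℓ η t) x y ∧
      posT b ℓ η z (t+1) = if posT b ℓ η z t = x then y else posT b ℓ η z t := by
  cases hget : (plan b ℓ η)[t]? with
  | none =>
      left
      refine ⟨conf_succ_none hget, ?_⟩
      simp [posT, hget]
  | some e =>
      have ht : t < (plan b ℓ η).length := by
        by_contra hcon
        rw [List.getElem?_eq_none_iff.2 (by omega)] at hget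
        cases hget
      have hgeteq : (plan b ℓ η)[t]'ht = e := by
        have h2 : (plan b ℓ η)[t]? = some ((plan b ℓ η)[t]'ht) := List.getElem?_eq_getElem ht
        rw [hget] at h2
        exact (Option.some_injective _ h2).symm
      have hlegal := legalRun_get (master hl hG hbot) t ht
      rw [hgeteq] at hlegal
      obtain ⟨hadj, hbx, hby, hcons⟩ := hlegal
      have hconf := conf_succ_some (b := b) (ℓ := ℓ) hget
      by_cases hne : confT b ℓ η t e.1 = confT b ℓ η t e.2
      · left
        refine ⟨by rw [hconf, swap_eq_self hne], ?_⟩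
        simp [posT, hget, hne]
      · right
        cases h1 : confT b ℓ η t e.1 with
        | true =>
            have h2 : confT b ℓ η t e.2 = false := by
              cases h2 : confT b ℓ η t e.2
              · rfl
              · rw [h1, h2] at hne; exact absurd rfl hne
            refine ⟨e.1, e.2, hadj, hbx, hby, h1, h2, hcons, hconf, ?_⟩
            have hp2 : posT b ℓ η z t ≠ e.2 := by
              intro hp
              have := pos_occ (b := b) (ℓ := ℓ) η z hz t
              rw [hp, h2] at this
              exact Bool.noConfusion this
            by_cases hp1 : posT b ℓ η z t = e.1
            · have hpos : posT b ℓ η z (t+1) = e.2 := by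
                simp [posT, hget, hne, hp1]
              rw [hpos, if_pos hp1]
            · have hpos : posT b ℓ η z (t+1) = posT b ℓ η z t := by
                simp [posT, hget, hne, hp1, hp2]
              rw [hpos, if_neg hp1]
        | false =>
            have h2 : confT b ℓ η t e.2 = true := by
              cases h2 : confT b ℓ η t e.2
              · rw [h1, h2] at hne; exact absurd rfl hne
              · rfl
            refine ⟨e.2, e.1, adj_symm hadj, hby, hbx, h2, h1, constraint_symm hcons, ?_, ?_⟩
            · rw [hconf, swap_comm]
            · have hp1 : posT b ℓ η z t ≠ e.1 := by
                intro hp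
                have := pos_occ (b := b) (ℓ := ℓ) η z hz t
                rw [hp, h1] at this
                exact Bool.noConfusion this
              by_cases hp2 : posT b ℓ η z t = e.2
              · have hpos : posT b ℓ η z (t+1) = e.1 := by
                  simp [posT, hget, hne, hp1, hp2]
                rw [hpos, if_pos hp2]
              · have hpos : posT b ℓ η z (t+1) = posT b ℓ η z t := by
                  simp [posT, hget, hne, hp1, hp2]
                rw [hpos, if_neg hp2]

/-! ### reconstruction -/

lemma recon (η : Config 2) (l : List E2) : (run η l) ∘ ⇑(permOf l).symm = η := by
  rw [run_eq_comp]
  funext w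
  simp

lemma plansF_congr {f f' : ℕ → ℕ × ℕ} : ∀ n, (∀ j, j < n → f j = f' j) →
    plansF b ℓ f n = plansF b ℓ f' n
  | 0, _ => rfl
  | (n+1), h => by
      simp only [plansF]
      rw [plansF_congr n (fun j hj => h j (by omega)), h n (by omega)]

lemma card_bound (hl : 2 ≤ ℓ) :
    (((ℓ * ℓ) ^ (ℓ - 1) : ℕ) : ℝ) ≤ (2 : ℝ) ^ ((3 : ℝ) * ℓ * Real.logb 2 ℓ) := by
  have hℓ0 : (0:ℝ) < (ℓ:ℝ) := by
    have : (0:ℕ) < ℓ := by omega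
    exact_mod_cast this
  have h1 : (1:ℝ) ≤ (ℓ:ℝ) := by
    have : (1:ℕ) ≤ ℓ := by omega
    exact_mod_cast this
  have hrhs : (2:ℝ) ^ ((3:ℝ) * ℓ * Real.logb 2 ℓ) = (ℓ:ℝ) ^ (((3 * ℓ : ℕ) : ℝ)) := by
    rw [show (3:ℝ) * ℓ * Real.logb 2 ℓ = Real.logb 2 ℓ * ((3 * ℓ : ℕ) : ℝ) by push_cast; ring]
    rw [Real.rpow_mul (by norm_num : (0:ℝ) ≤ 2)]
    rw [Real.rpow_logb (by norm_num) (by norm_num) hℓ0]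
  rw [hrhs, Real.rpow_natCast]
  have hcast : (((ℓ * ℓ) ^ (ℓ - 1) : ℕ) : ℝ) = ((ℓ:ℝ)^2) ^ (ℓ - 1) := by
    push_cast
    ring
  rw [hcast, ← pow_mul]
  exact pow_le_pow_right₀ h1 (by omega)

end S9

/-- (Framing move, `k = d = 2`.) If the box `b + [ℓ]²` is
`(2,2)`-good and its bottom row is empty, a `T`-step move empties its left
column, with `T ≤ C ℓ²` and `Loss ≤ C ℓ log₂ ℓ`. -/
theorem statement9 :
    ∃ C : ℝ, 0 < C ∧
      ∀ ℓ : ℕ, 2 ≤ ℓ → ∀ b : Site 2,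
        ∃ T : ℕ,
          ∃ mv : TStepMove 2 2
            {η | Good22 b ℓ η ∧ ∀ z ∈ box2 b ℓ, z 1 = b 1 + 1 → η z = false}
            (box2 b ℓ) T,
            (T : ℝ) ≤ C * (ℓ : ℝ) ^ 2 ∧
            LossBoundedBy mv (C * ℓ * Real.logb 2 ℓ) ∧
            ∀ η : Config 2,
              (Good22 b ℓ η ∧ ∀ z ∈ box2 b ℓ, z 1 = b 1 + 1 → η z = false) →
              (∀ z ∈ box2 b ℓ, z 0 = b 0 + 1 → mv.conf η T z = false) ∧
              (∀ z ∉ box2 b ℓ, mv.conf η T z = η z) := by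
  classical
  refine ⟨3, by norm_num, ?_⟩
  intro ℓ hl b
  -- helper: bottom row hypothesis in coordinates
  have hbotC : ∀ η : Config 2,
      (∀ z ∈ box2 b ℓ, z 1 = b 1 + 1 → η z = false) →
      ∀ c, 1 ≤ c → c ≤ ℓ → η (S9.pt b c 1) = false := by
    intro η h c h1 h2
    refine h _ (S9.mem_box_pt h1 h2 (by omega) (by omega)) ?_
    rw [S9.pt_one]
    norm_num
  refine ⟨3 * ℓ * ℓ,
    ⟨fun η t => S9.confT b ℓ η t, fun η z t => S9.posT b ℓ η z t,
     fun η _ => rfl, fun η _ z _ => rfl, ?_⟩, ?_, ?_, ?_⟩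
  · -- step
    intro η hη z hz t _
    exact S9.step_ok hl hη.1.1 (hbotC η hη.2) z hz t
  · -- T bound
    have : ((3 * ℓ * ℓ : ℕ) : ℝ) = 3 * (ℓ:ℝ)^2 := by push_cast; ring
    rw [this]
  · -- Loss
    intro t _ η' hη'
    refine ⟨Finset.image (fun g : Fin (ℓ-1) → Fin ℓ × Fin ℓ =>
        (S9.confT b ℓ η' t) ∘ ⇑(S9.permOf ((S9.plansF b ℓ (fun k =>
          if h : k < ℓ - 1 then (((g ⟨k, h⟩).1 : ℕ) + 1, ((g ⟨k, h⟩).2 : ℕ) + 1)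
          else (1,1)) (ℓ - 1)).take t)).symm) Finset.univ, ?_, ?_⟩
    · intro η₀ hη₀
      obtain ⟨hM0, hc1, hc2⟩ := hη₀
      have hG₀ := hM0.1.1
      have hspec : ∀ j : ℕ, j < ℓ - 1 →
          1 ≤ S9.chA b ℓ η₀ (j+2) ∧ S9.chA b ℓ η₀ (j+2) ≤ ℓ ∧
          1 ≤ S9.chB b ℓ η₀ (j+2) ∧ S9.chB b ℓ η₀ (j+2) ≤ ℓ := by
        intro j hj
        obtain ⟨h1, h2, h3, _, _⟩ := S9.choice_spec η₀ hG₀ (by omega) (by omega : j + 2 ≤ ℓ)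
        exact ⟨h1, by omega, by omega, h3⟩
      refine Finset.mem_coe.2 (Finset.mem_image.2
        ⟨fun i => (⟨S9.chA b ℓ η₀ ((i:ℕ)+2) - 1, by
            have := hspec i i.2; omega⟩,
          ⟨S9.chB b ℓ η₀ ((i:ℕ)+2) - 1, by
            have := hspec i i.2; omega⟩), Finset.mem_univ _, ?_⟩)
      have hfeq : S9.plansF b ℓ (fun k =>
          if h : k < ℓ - 1 then
            ((S9.chA b ℓ η₀ (k+2) - 1) + 1, (S9.chB b ℓ η₀ (k+2) - 1) + 1)
          else (1,1)) (ℓ - 1) = S9.plan b ℓ η₀ := by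
        refine S9.plansF_congr (ℓ - 1) ?_
        intro j hj
        have := hspec j hj
        rw [dif_pos hj]
        unfold S9.chF
        have e1 : S9.chA b ℓ η₀ (j+2) - 1 + 1 = S9.chA b ℓ η₀ (j+2) := by omega
        have e2 : S9.chB b ℓ η₀ (j+2) - 1 + 1 = S9.chB b ℓ η₀ (j+2) := by omega
        rw [e1, e2]
      have hc1' : S9.confT b ℓ η₀ t = S9.confT b ℓ η' t := hc1
      show (S9.confT b ℓ η' t) ∘ _ = η₀
      rw [hfeq, ← hc1']
      exact S9.recon η₀ ((S9.plan b ℓ η₀).take t)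
    · have hcard : (Finset.image (fun g : Fin (ℓ-1) → Fin ℓ × Fin ℓ =>
          (S9.confT b ℓ η' t) ∘ ⇑(S9.permOf ((S9.plansF b ℓ (fun k =>
            if h : k < ℓ - 1 then (((g ⟨k, h⟩).1 : ℕ) + 1, ((g ⟨k, h⟩).2 : ℕ) + 1)
            else (1,1)) (ℓ - 1)).take t)).symm) Finset.univ).card
          ≤ (ℓ * ℓ) ^ (ℓ - 1) := by
        refine Finset.card_image_le.trans ?_
        rw [Finset.card_univ]
        rw [Fintype.card_fun]
        simp [Fintype.card_prod]
      calc ((Finset.image _ Finset.univ).card : ℝ)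
          ≤ (((ℓ * ℓ) ^ (ℓ - 1) : ℕ) : ℝ) := by exact_mod_cast hcard
        _ ≤ (2 : ℝ) ^ ((3:ℝ) * ℓ * Real.logb 2 ℓ) := S9.card_bound hl
  · -- final configuration
    intro η hη
    have hG := hη.1.1
    have hbot := hbotC η hη.2
    have hlen : (S9.plan b ℓ η).length ≤ 3 * ℓ * ℓ := by
      refine (S9.len_plan (by omega) η).trans ?_
      exact Nat.mul_le_mul_left _ (by omega)
    have hT : S9.confT b ℓ η (3 * ℓ * ℓ) = S9.run η (S9.plan b ℓ η) := by
      unfold S9.confT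
      rw [List.take_of_length_le hlen]
    obtain ⟨_, hRow, hDel, hAg⟩ := S9.main_inv η hG hbot (ℓ-1) le_rfl
    have hsub : ℓ - 1 + 1 = ℓ := by omega
    rw [hsub] at hRow
    constructor
    · intro z hzbox hz0
      obtain ⟨c, r, hc1, hcl, hr1, hrl, hzeq⟩ := S9.eq_pt_of_mem_box hzbox
      have hc : c = 1 := by
        rw [hzeq, S9.pt_zero] at hz0
        omega
      subst hc
      show S9.confT b ℓ η (3 * ℓ * ℓ) z = false
      rw [hzeq, hT]
      rcases Nat.lt_or_ge r ℓ with h | h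
      · exact hDel r hr1 (by omega)
      · have : r = ℓ := by omega
        subst this
        exact hRow 1 le_rfl (by omega)
    · intro z hznot
      show S9.confT b ℓ η (3 * ℓ * ℓ) z = η z
      rw [hT]
      exact hAg z (Or.inl hznot)


end KA
end
end

section
/- (Jump move, k = d = 2.) Fix ℓ ≥ 2, y ∈ ℤ², and a site ⋆ ∈ y + {−1}×[ℓ]. Let M be the set of configurations η such that the column y + {0}×[ℓ] is entirely empty, the column y + {−1}×[ℓ] contains at least one empty site other than ⋆, and the column y + {1}×[ℓ] contains at least two empty sites. There exists a T-step move M with domain determined by M such that for every η ∈ M with η(⋆) = 1 the final configuration is M_T η = η^{⋆, ⋆+(2,0)} (the values at ⋆ and ⋆+(2,0) are exchanged) and the tracked particle satisfies z_T(η,⋆) = ⋆ + (2,0). Moreover, Loss(M) ≤ C log₂ ℓ and T ≤ C ℓ for a universal constant C. -/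
open MeasureTheory ENNReal

noncomputable section

namespace KA

open scoped Classical

variable {d : ℕ}

/-! ### Auxiliary infrastructure for Statement 11 -/

def P2 (a b : ℤ) : Site 2 := ![a, b]

@[simp] lemma P2_zero (a b : ℤ) : P2 a b 0 = a := rfl
@[simp] lemma P2_one (a b : ℤ) : P2 a b 1 = b := rfl

lemma P2_inj {a b c d : ℤ} (h : P2 a b = P2 c d) : a = c ∧ b = d :=
  ⟨congrFun h 0, congrFun h 1⟩

lemma P2_ne_fst {a b c d : ℤ} (h : a ≠ c) : P2 a b ≠ P2 c d := fun he => h (P2_inj he).1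
lemma P2_ne_snd {a b c d : ℤ} (h : b ≠ d) : P2 a b ≠ P2 c d := fun he => h (P2_inj he).2

lemma eq_P2 (z : Site 2) : z = P2 (z 0) (z 1) := by
  funext i; fin_cases i <;> rfl

lemma adj_P2 {a b c d : ℤ} (h : |a - c| + |b - d| = 1) : adj (P2 a b) (P2 c d) := by
  simpa [adj, Fin.sum_univ_two] using h

lemma adj_symm2 {x y : Site 2} (h : adj x y) : adj y x := by
  unfold adj at h ⊢
  rw [Fin.sum_univ_two] at h ⊢
  rw [abs_sub_comm (y 0), abs_sub_comm (y 1)]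
  exact h

lemma mem_neighbors_of (x z : Site 2) (i : Fin 2) (s : Bool)
    (h : z = Function.update x i (x i + if s then 1 else -1)) : z ∈ neighbors x := by
  rw [h]; exact Finset.mem_image.mpr ⟨(i, s), Finset.mem_univ _, rfl⟩

lemma nb_horiz {a a' b : ℤ} (h : a' = a + 1 ∨ a' = a - 1) : P2 a' b ∈ neighbors (P2 a b) := by
  rcases h with h | h
  · apply mem_neighbors_of _ _ 0 true
    funext j; fin_cases j <;> simp [Function.update_apply, h]
  · apply mem_neighbors_of _ _ 0 false
    funext j; fin_cases j <;> simp [Function.update_apply, h, sub_eq_add_neg]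

lemma nb_vert {a b b' : ℤ} (h : b' = b + 1 ∨ b' = b - 1) : P2 a b' ∈ neighbors (P2 a b) := by
  rcases h with h | h
  · apply mem_neighbors_of _ _ 1 true
    funext j; fin_cases j <;> simp [Function.update_apply, h]
  · apply mem_neighbors_of _ _ 1 false
    funext j; fin_cases j <;> simp [Function.update_apply, h, sub_eq_add_neg]

lemma constraint2_of {σ : Config 2} {x y zx zy : Site 2}
    (hx : zx ∈ neighbors x) (hx1 : zx ≠ y) (hx2 : σ zx = false)
    (hy : zy ∈ neighbors y) (hy1 : zy ≠ x) (hy2 : σ zy = false) :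
    constraint 2 σ x y := by
  constructor
  · rw [show (2:ℕ) - 1 = 1 from rfl]
    exact Finset.one_le_card.mpr ⟨zx, Finset.mem_filter.mpr ⟨hx, hx1, hx2⟩⟩
  · rw [show (2:ℕ) - 1 = 1 from rfl]
    exact Finset.one_le_card.mpr ⟨zy, Finset.mem_filter.mpr ⟨hy, hy1, hy2⟩⟩

lemma constraint_symm2 {σ : Config 2} {x y : Site 2} (h : constraint 2 σ x y) :
    constraint 2 σ y x := ⟨h.2, h.1⟩

/-! swap lemmas -/

lemma swap_fst (σ : Config 2) (x y : Site 2) : swap σ x y x = σ y := by simp [swap]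

lemma swap_snd (σ : Config 2) (x y : Site 2) : swap σ x y y = σ x := by
  by_cases h : y = x <;> simp [swap, h]

lemma swap_other {σ : Config 2} {x y z : Site 2} (h1 : z ≠ x) (h2 : z ≠ y) :
    swap σ x y z = σ z := by simp [swap, h1, h2]

lemma swap_eq_self {σ : Config 2} {x y : Site 2} (h : σ x = σ y) : swap σ x y = σ := by
  funext z
  by_cases h1 : z = x
  · subst h1; rw [swap_fst, h]
  · by_cases h2 : z = y
    · subst h2; rw [swap_snd, h]
    · exact swap_other h1 h2

lemma swap_swap (σ : Config 2) (x y : Site 2) : swap (swap σ x y) x y = σ := by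
  funext z
  by_cases h1 : z = x
  · subst h1; rw [swap_fst, swap_snd]
  · by_cases h2 : z = y
    · subst h2; rw [swap_snd, swap_fst]
    · rw [swap_other h1 h2, swap_other h1 h2]

lemma swap_comm (σ : Config 2) (x y : Site 2) : swap σ x y = swap σ y x := by
  funext z
  by_cases h1 : z = x
  · subst h1; rw [swap_fst, swap_snd]
  · by_cases h2 : z = y
    · subst h2; rw [swap_snd, swap_fst]
    · rw [swap_other h1 h2, swap_other h2 h1]

/-! lists of swaps -/

abbrev Pairs2 := List (Site 2 × Site 2)

def applyL : Pairs2 → Config 2 → Config 2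
  | [], σ => σ
  | p :: L, σ => applyL L (swap σ p.1 p.2)

def OKpair (σ : Config 2) (p : Site 2 × Site 2) : Prop :=
  σ p.1 = σ p.2 ∨ (adj p.1 p.2 ∧ constraint 2 σ p.1 p.2)

inductive ValidL : Config 2 → Pairs2 → Prop
  | nil (σ : Config 2) : ValidL σ []
  | cons {σ : Config 2} {p : Site 2 × Site 2} {L : Pairs2} :
      OKpair σ p → ValidL (swap σ p.1 p.2) L → ValidL σ (p :: L)

def posStep (σ : Config 2) (p : Site 2 × Site 2) (z : Site 2) : Site 2 :=
  if σ p.1 = true ∧ σ p.2 = false ∧ z = p.1 then p.2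
  else if σ p.2 = true ∧ σ p.1 = false ∧ z = p.2 then p.1 else z

def posL : Pairs2 → Config 2 → Site 2 → Site 2
  | [], _, z => z
  | p :: L, σ, z => posL L (swap σ p.1 p.2) (posStep σ p z)

@[simp] lemma applyL_nil (σ : Config 2) : applyL [] σ = σ := rfl
@[simp] lemma applyL_cons (p : Site 2 × Site 2) (L : Pairs2) (σ : Config 2) :
    applyL (p :: L) σ = applyL L (swap σ p.1 p.2) := rfl
@[simp] lemma posL_nil (σ : Config 2) (z : Site 2) : posL [] σ z = z := rfl
@[simp] lemma posL_cons (p : Site 2 × Site 2) (L : Pairs2) (σ : Config 2) (z : Site 2) :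
    posL (p :: L) σ z = posL L (swap σ p.1 p.2) (posStep σ p z) := rfl

lemma applyL_append (L L' : Pairs2) (σ : Config 2) :
    applyL (L ++ L') σ = applyL L' (applyL L σ) := by
  induction L generalizing σ with
  | nil => rfl
  | cons p L ih => simp [ih]

lemma posL_append (L L' : Pairs2) (σ : Config 2) (z : Site 2) :
    posL (L ++ L') σ z = posL L' (applyL L σ) (posL L σ z) := by
  induction L generalizing σ z with
  | nil => rfl
  | cons p L ih => simp [ih]

lemma applyL_reverse (L : Pairs2) (σ : Config 2) : applyL L.reverse (applyL L σ) = σ := by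
  induction L generalizing σ with
  | nil => rfl
  | cons p L ih =>
      simp only [List.reverse_cons, applyL_cons, applyL_append]
      rw [ih]
      simp [swap_swap]

lemma applyL_notMem {L : Pairs2} {z : Site 2} (h : ∀ p ∈ L, z ≠ p.1 ∧ z ≠ p.2)
    (σ : Config 2) : applyL L σ z = σ z := by
  induction L generalizing σ with
  | nil => rfl
  | cons p L ih =>
      rw [applyL_cons, ih fun q hq => h q (List.mem_cons_of_mem _ hq)]
      exact swap_other (h p (List.mem_cons_self)).1 (h p (List.mem_cons_self)).2

lemma posL_notMem {L : Pairs2} {z : Site 2} (h : ∀ p ∈ L, z ≠ p.1 ∧ z ≠ p.2)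
    (σ : Config 2) : posL L σ z = z := by
  induction L generalizing σ with
  | nil => rfl
  | cons p L ih =>
      rw [posL_cons]
      have hz : posStep σ p z = z := by
        unfold posStep
        rw [if_neg, if_neg]
        · exact fun hc => (h p (List.mem_cons_self)).2 hc.2.2
        · exact fun hc => (h p (List.mem_cons_self)).1 hc.2.2
      rw [hz]
      exact ih (fun q hq => h q (List.mem_cons_of_mem _ hq)) (swap σ p.1 p.2)

lemma validL_append {L L' : Pairs2} {σ : Config 2}
    (h : ValidL σ L) (h' : ValidL (applyL L σ) L') : ValidL σ (L ++ L') := by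
  induction h with
  | nil => exact h'
  | cons hp _ ih => exact ValidL.cons hp (ih h')

lemma validL_get {σ : Config 2} {L : Pairs2} (h : ValidL σ L) :
    ∀ (t : ℕ) (ht : t < L.length), OKpair (applyL (L.take t) σ) (L.get ⟨t, ht⟩) := by
  induction h with
  | nil => intro t ht; simp at ht
  | cons hp hv ih =>
      intro t ht
      cases t with
      | zero => exact hp
      | succ t => exact ih t (Nat.lt_of_succ_lt_succ ht)

lemma take_succ_get {L : Pairs2} {t : ℕ} (ht : t < L.length) :
    L.take (t + 1) = L.take t ++ [L.get ⟨t, ht⟩] := by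
  rw [List.take_succ]
  congr 1
  rw [List.getElem?_eq_getElem ht]
  rfl

lemma applyL_take_succ {L : Pairs2} {t : ℕ} (ht : t < L.length) (σ : Config 2) :
    applyL (L.take (t + 1)) σ =
      swap (applyL (L.take t) σ) (L.get ⟨t, ht⟩).1 (L.get ⟨t, ht⟩).2 := by
  rw [take_succ_get ht, applyL_append]; rfl

lemma posL_take_succ {L : Pairs2} {t : ℕ} (ht : t < L.length) (σ : Config 2) (z : Site 2) :
    posL (L.take (t + 1)) σ z =
      posStep (applyL (L.take t) σ) (L.get ⟨t, ht⟩) (posL (L.take t) σ z) := by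
  rw [take_succ_get ht, posL_append]; rfl

/-! hole slides -/

def slideL (X g d : ℤ) : ℕ → Pairs2
  | 0 => []
  | n + 1 => (P2 X (g + n * d), P2 X (g + (n + 1) * d)) :: slideL X g d n

lemma slideL_length (X g d : ℤ) (n : ℕ) : (slideL X g d n).length = n := by
  induction n with
  | zero => rfl
  | succ n ih => simp [slideL, ih]

lemma slideL_mem {X g d : ℤ} {n : ℕ} {p : Site 2 × Site 2} (h : p ∈ slideL X g d n) :
    ∃ i : ℕ, i + 1 ≤ n ∧ p.1 = P2 X (g + i * d) ∧ p.2 = P2 X (g + (i + 1) * d) := by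
  induction n with
  | zero => simp [slideL] at h
  | succ n ih =>
      rcases List.mem_cons.mp h with h | h
      · exact ⟨n, le_rfl, by rw [h], by rw [h]⟩
      · obtain ⟨i, hi, h1, h2⟩ := ih h
        exact ⟨i, Nat.le_succ_of_le hi, h1, h2⟩

lemma slide_spec (X X0 : ℤ) (hX : X0 = X + 1 ∨ X0 = X - 1) (g d : ℤ) (hd : d = 1 ∨ d = -1) :
    ∀ (n : ℕ) (σ : Config 2),
      (∀ i : ℕ, i ≤ n → σ (P2 X0 (g + i * d)) = false) →
      σ (P2 X (g + n * d)) = false →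
      (∀ i : ℕ, i < n → σ (P2 X (g + i * d)) = true) →
      ValidL σ (slideL X g d n) ∧
      (∀ z : Site 2, (∀ i : ℕ, i ≤ n → z ≠ P2 X (g + i * d)) →
        applyL (slideL X g d n) σ z = σ z) ∧
      applyL (slideL X g d n) σ (P2 X g) = false ∧
      (∀ i : ℕ, 1 ≤ i → i ≤ n → applyL (slideL X g d n) σ (P2 X (g + i * d)) = true) := by
  have hXne : X0 ≠ X := by rcases hX with h | h <;> omega
  have hrow : ∀ i j : ℕ, i ≠ j → g + i * d ≠ g + j * d := by
    intro i j hij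
    rcases hd with h | h <;> subst h <;> omega
  intro n
  induction n with
  | zero =>
      intro σ hcol0 hhole hpath
      refine ⟨ValidL.nil σ, fun z _ => rfl, ?_, fun i h1 h2 => by omega⟩
      simpa [slideL] using hhole
  | succ n ih =>
      intro σ hcol0 hhole hpath
      have hrow' : ∀ i : ℕ, i ≠ n + 1 → g + (i : ℤ) * d ≠ g + ((n : ℤ) + 1) * d := by
        intro i hi
        rcases hd with h | h <;> subst h <;> omega
      set p1 : Site 2 := P2 X (g + (n : ℤ) * d) with hp1
      set p2 : Site 2 := P2 X (g + ((n : ℤ) + 1) * d) with hp2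
      have hv1 : σ p1 = true := hpath n (Nat.lt_succ_self n)
      have hv2 : σ p2 = false := by push_cast at hhole; exact hhole
      have hcol0n1 : σ (P2 X0 (g + ((n : ℤ) + 1) * d)) = false := by
        have := hcol0 (n + 1) le_rfl; push_cast at this; exact this
      have hne12 : p1 ≠ p2 := P2_ne_snd (hrow' n (by omega))
      have hok : OKpair σ (p1, p2) := by
        right
        refine ⟨adj_P2 ?_, constraint2_of (nb_horiz hX) (P2_ne_fst hXne)
          (hcol0 n (by omega)) (nb_horiz hX) (P2_ne_fst hXne) hcol0n1⟩
        rw [sub_self, abs_zero, zero_add]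
        have he : (g + (n : ℤ) * d) - (g + ((n : ℤ) + 1) * d) = -d := by ring
        rw [he]
        rcases hd with h | h <;> subst h <;> norm_num
      set σ' : Config 2 := swap σ p1 p2 with hσ'
      have hstep : ∀ L : Pairs2, applyL ((p1, p2) :: L) σ = applyL L σ' := fun _ => rfl
      have hcol0' : ∀ i : ℕ, i ≤ n → σ' (P2 X0 (g + (i : ℤ) * d)) = false := by
        intro i hi
        rw [hσ', swap_other (P2_ne_fst hXne) (P2_ne_fst hXne)]
        exact hcol0 i (by omega)
      have hhole' : σ' (P2 X (g + (n : ℤ) * d)) = false := by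
        show swap σ p1 p2 p1 = false
        rw [swap_fst]; exact hv2
      have hpath' : ∀ i : ℕ, i < n → σ' (P2 X (g + (i : ℤ) * d)) = true := by
        intro i hi
        rw [hσ', swap_other (P2_ne_snd (hrow i n (by omega))) (P2_ne_snd (hrow' i (by omega)))]
        exact hpath i (by omega)
      obtain ⟨ihv, ihoff, ihhole, ihpath⟩ := ih σ' hcol0' hhole' hpath'
      refine ⟨ValidL.cons hok ihv, ?_, ?_, ?_⟩
      · intro z hz
        have h1 : z ≠ p1 := hz n (by omega)
        have h2 : z ≠ p2 := by
          have := hz (n + 1) le_rfl; push_cast at this; exact this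
        show applyL (slideL X g d n) σ' z = σ z
        rw [ihoff z fun i hi => hz i (by omega), hσ', swap_other h1 h2]
      · show applyL (slideL X g d n) σ' (P2 X g) = false
        exact ihhole
      · intro i h1 h2
        by_cases hi : i ≤ n
        · exact ihpath i h1 hi
        · have hieq : i = n + 1 := by omega
          subst hieq
          show applyL (slideL X g d n) σ' (P2 X (g + ((n + 1 : ℕ) : ℤ) * d)) = true
          have hc : P2 X (g + ((n + 1 : ℕ) : ℤ) * d) = p2 := by
            rw [hp2]; norm_num
          rw [hc, ihoff p2 fun j hj => fun hcon => (hrow' j (by omega)) (P2_inj hcon).2.symm]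
          show swap σ p1 p2 p2 = true
          rw [swap_snd]; exact hv1

lemma adj_vert {a b b' : ℤ} (h : b' = b + 1 ∨ b' = b - 1) : adj (P2 a b) (P2 a b') := by
  apply adj_P2
  rw [sub_self, abs_zero, zero_add]
  rcases h with h | h <;> subst h <;>
    [(rw [show b - (b+1) = -1 by ring]); (rw [show b - (b-1) = 1 by ring])] <;> norm_num

lemma adj_horiz {a a' b : ℤ} (h : a' = a + 1 ∨ a' = a - 1) : adj (P2 a b) (P2 a' b) := by
  apply adj_P2
  rw [show b - b = 0 by ring, abs_zero, add_zero]
  rcases h with h | h <;> subst h <;>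
    [(rw [show a - (a+1) = -1 by ring]); (rw [show a - (a-1) = 1 by ring])] <;> norm_num

/-! ### the middle blocks of the jump move -/

@[simp] lemma P2_eq_iff {a b c d : ℤ} : P2 a b = P2 c d ↔ a = c ∧ b = d := by
  constructor
  · exact fun h => P2_inj h
  · rintro ⟨rfl, rfl⟩; rfl

def midT (Y s g1 : ℤ) : Pairs2 :=
  [(P2 (Y+1) s, P2 (Y+1) g1), (P2 (Y+1) g1, P2 Y g1), (P2 (Y-1) s, P2 Y s),
   (P2 Y s, P2 (Y+1) s), (P2 Y g1, P2 Y s), (P2 Y s, P2 (Y-1) s)]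

def midF (Y s : ℤ) : Pairs2 := [(P2 (Y-1) s, P2 Y s), (P2 Y s, P2 (Y+1) s)]

lemma midT_spec (Y s g1 g2 : ℤ) (σ : Config 2)
    (hg1 : g1 = s + 1 ∨ g1 = s - 1) (hg2 : g2 = s + 1 ∨ g2 = s - 1)
    (hst : σ (P2 (Y-1) s) = true) (ho : σ (P2 Y s) = false) (ho' : σ (P2 Y g1) = false)
    (hcs : σ (P2 (Y+1) s) = true) (hb1 : σ (P2 (Y+1) g1) = false)
    (haw : σ (P2 (Y-1) g2) = false) :
    ValidL σ (midT Y s g1) ∧ applyL (midT Y s g1) σ = σ ∧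
    posL (midT Y s g1) σ (P2 (Y-1) s) = P2 (Y+1) s := by
  have n1 : (Y:ℤ) - 1 ≠ Y + 1 := by omega
  have n2 : (Y:ℤ) - 1 ≠ Y := by omega
  have n3 : (Y:ℤ) ≠ Y + 1 := by omega
  have n4 : s ≠ g1 := by rcases hg1 with h | h <;> omega
  have n5 : s ≠ g2 := by rcases hg2 with h | h <;> omega
  set st := P2 (Y-1) s with hstd
  set aw := P2 (Y-1) g2 with hawd
  set o := P2 Y s with hod
  set o' := P2 Y g1 with ho'd
  set cs := P2 (Y+1) s with hcsd
  set b1 := P2 (Y+1) g1 with hb1d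
  -- distinctness
  have d1 : st ≠ o := P2_ne_fst n2
  have d2 : st ≠ o' := P2_ne_fst n2
  have d3 : st ≠ cs := P2_ne_fst n1
  have d4 : st ≠ b1 := P2_ne_fst n1
  have d5 : st ≠ aw := P2_ne_snd n5
  have d6 : o ≠ o' := P2_ne_snd n4
  have d7 : o ≠ cs := P2_ne_fst n3
  have d8 : o ≠ b1 := P2_ne_fst n3
  have d9 : o ≠ aw := P2_ne_fst (Ne.symm n2)
  have d10 : o' ≠ cs := P2_ne_fst n3
  have d11 : o' ≠ b1 := P2_ne_fst n3
  have d12 : o' ≠ aw := P2_ne_fst (Ne.symm n2)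
  have d13 : cs ≠ b1 := P2_ne_snd n4
  have d14 : cs ≠ aw := P2_ne_fst (Ne.symm n1)
  have d15 : b1 ≠ aw := P2_ne_fst (Ne.symm n1)
  set q1 := swap σ cs b1 with hq1
  set q2 := swap q1 b1 o' with hq2
  set q3 := swap q2 st o with hq3
  set q4 := swap q3 o cs with hq4
  set q5 := swap q4 o' o with hq5
  set q6 := swap q5 o st with hq6
  -- values of q1
  have q1st : q1 st = true := by rw [hq1, swap_other d3 d4]; exact hst
  have q1o : q1 o = false := by rw [hq1, swap_other d7 d8]; exact ho
  have q1o' : q1 o' = false := by rw [hq1, swap_other d10 d11]; exact ho'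
  have q1cs : q1 cs = false := by rw [hq1, swap_fst]; exact hb1
  have q1b1 : q1 b1 = true := by rw [hq1, swap_snd]; exact hcs
  have q1aw : q1 aw = false := by
    rw [hq1, swap_other (Ne.symm d14) (Ne.symm d15)]; exact haw
  -- values of q2
  have q2st : q2 st = true := by rw [hq2, swap_other d4 d2]; exact q1st
  have q2o : q2 o = false := by rw [hq2, swap_other d8 d6]; exact q1o
  have q2o' : q2 o' = true := by rw [hq2, swap_snd]; exact q1b1
  have q2cs : q2 cs = false := by rw [hq2, swap_other d13 (Ne.symm d10)]; exact q1cs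
  have q2b1 : q2 b1 = false := by rw [hq2, swap_fst]; exact q1o'
  have q2aw : q2 aw = false := by rw [hq2, swap_other (Ne.symm d15) (Ne.symm d12)]; exact q1aw
  -- values of q3
  have q3st : q3 st = false := by rw [hq3, swap_fst]; exact q2o
  have q3o : q3 o = true := by rw [hq3, swap_snd]; exact q2st
  have q3o' : q3 o' = true := by rw [hq3, swap_other (Ne.symm d2) (Ne.symm d6)]; exact q2o'
  have q3cs : q3 cs = false := by rw [hq3, swap_other (Ne.symm d3) (Ne.symm d7)]; exact q2cs
  have q3b1 : q3 b1 = false := by rw [hq3, swap_other (Ne.symm d4) (Ne.symm d8)]; exact q2b1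
  have q3aw : q3 aw = false := by rw [hq3, swap_other (Ne.symm d5) (Ne.symm d9)]; exact q2aw
  -- values of q4
  have q4st : q4 st = false := by rw [hq4, swap_other d1 d3]; exact q3st
  have q4o : q4 o = false := by rw [hq4, swap_fst]; exact q3cs
  have q4o' : q4 o' = true := by rw [hq4, swap_other (Ne.symm d6) d10]; exact q3o'
  have q4cs : q4 cs = true := by rw [hq4, swap_snd]; exact q3o
  have q4b1 : q4 b1 = false := by rw [hq4, swap_other (Ne.symm d8) (Ne.symm d13)]; exact q3b1
  have q4aw : q4 aw = false := by rw [hq4, swap_other (Ne.symm d9) (Ne.symm d14)]; exact q3aw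
  -- values of q5
  have q5st : q5 st = false := by rw [hq5, swap_other d2 d1]; exact q4st
  have q5o : q5 o = true := by rw [hq5, swap_snd]; exact q4o'
  have q5o' : q5 o' = false := by rw [hq5, swap_fst]; exact q4o
  have q5cs : q5 cs = true := by rw [hq5, swap_other (Ne.symm d10) (Ne.symm d7)]; exact q4cs
  have q5b1 : q5 b1 = false := by rw [hq5, swap_other (Ne.symm d11) (Ne.symm d8)]; exact q4b1
  have q5aw : q5 aw = false := by rw [hq5, swap_other (Ne.symm d12) (Ne.symm d9)]; exact q4aw
  -- values of q6
  have q6st : q6 st = true := by rw [hq6, swap_snd]; exact q5o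
  have q6o : q6 o = false := by rw [hq6, swap_fst]; exact q5st
  have q6o' : q6 o' = false := by rw [hq6, swap_other (Ne.symm d6) (Ne.symm d2)]; exact q5o'
  have q6cs : q6 cs = true := by rw [hq6, swap_other (Ne.symm d7) (Ne.symm d3)]; exact q5cs
  have q6b1 : q6 b1 = false := by rw [hq6, swap_other (Ne.symm d8) (Ne.symm d4)]; exact q5b1
  refine ⟨?_, ?_, ?_⟩
  · -- validity
    refine ValidL.cons ?_ (ValidL.cons ?_ (ValidL.cons ?_ (ValidL.cons ?_
      (ValidL.cons ?_ (ValidL.cons ?_ (ValidL.nil _))))))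
    · right
      refine ⟨adj_vert hg1, ?_⟩
      exact constraint2_of (zx := o) (zy := o')
        (nb_horiz (by right; omega)) d8 ho
        (nb_horiz (by right; omega)) d10 ho'
    · show OKpair q1 (b1, o')
      right
      refine ⟨adj_horiz (by right; omega), ?_⟩
      exact constraint2_of (zx := cs) (zy := o)
        (nb_vert (by rcases hg1 with h | h <;> [right; left] <;> omega)) (Ne.symm d10) q1cs
        (nb_vert (by rcases hg1 with h | h <;> [right; left] <;> omega)) d8 q1o
    · show OKpair q2 (st, o)
      right
      refine ⟨adj_horiz (by left; omega), ?_⟩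
      exact constraint2_of (zx := aw) (zy := cs)
        (nb_vert hg2) (Ne.symm d9) q2aw
        (nb_horiz (by left; omega)) (Ne.symm d3) q2cs
    · show OKpair q3 (o, cs)
      right
      refine ⟨adj_horiz (by left; omega), ?_⟩
      exact constraint2_of (zx := st) (zy := b1)
        (nb_horiz (by right; omega)) d3 q3st
        (nb_vert hg1) (Ne.symm d8) q3b1
    · show OKpair q4 (o', o)
      right
      refine ⟨adj_vert (by rcases hg1 with h | h <;> [right; left] <;> omega), ?_⟩
      exact constraint2_of (zx := b1) (zy := st)
        (nb_horiz (by left; omega)) (Ne.symm d8) q4b1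
        (nb_horiz (by right; omega)) d2 q4st
    · show OKpair q5 (o, st)
      right
      refine ⟨adj_horiz (by right; omega), ?_⟩
      exact constraint2_of (zx := o') (zy := aw)
        (nb_vert (by rcases hg1 with h | h <;> [left; right] <;> omega)) (Ne.symm d2) q5o'
        (nb_vert hg2) (Ne.symm d9) q5aw
  · -- configuration is restored
    have : applyL (midT Y s g1) σ = q6 := rfl
    rw [this]
    funext z
    by_cases z1 : z = st
    · rw [z1, q6st, hst]
    by_cases z2 : z = o
    · rw [z2, q6o, ho]
    by_cases z3 : z = o' 
    · rw [z3, q6o', ho']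
    by_cases z4 : z = cs
    · rw [z4, q6cs, hcs]
    by_cases z5 : z = b1
    · rw [z5, q6b1, hb1]
    rw [hq6, swap_other z2 z1, hq5, swap_other z3 z2, hq4, swap_other z2 z4,
      hq3, swap_other z1 z2, hq2, swap_other z5 z3, hq1, swap_other z4 z5]
  · -- position of the tagged particle
    show posL (midT Y s g1) σ st = cs
    have e1 : posStep σ (cs, b1) st = st := by
      unfold posStep
      rw [if_neg (fun hc => d3 hc.2.2), if_neg (fun hc => d4 hc.2.2)]
    have e2 : posStep q1 (b1, o') st = st := by
      unfold posStep
      rw [if_neg (fun hc => d4 hc.2.2), if_neg (fun hc => d2 hc.2.2)]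
    have e3 : posStep q2 (st, o) st = o := by
      unfold posStep
      rw [if_pos ⟨q2st, q2o, rfl⟩]
    have e4 : posStep q3 (o, cs) o = cs := by
      unfold posStep
      rw [if_pos ⟨q3o, q3cs, rfl⟩]
    have e5 : posStep q4 (o', o) cs = cs := by
      unfold posStep
      rw [if_neg (fun hc => d10 hc.2.2.symm), if_neg (by simp [q4o])]
    have e6 : posStep q5 (o, st) cs = cs := by
      unfold posStep
      rw [if_neg (fun hc => d7 hc.2.2.symm), if_neg (by simp [q5st])]
    show posL _ q1 (posStep σ (cs, b1) st) = cs
    rw [e1]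
    show posL _ q2 (posStep q1 (b1, o') st) = cs
    rw [e2]
    show posL _ q3 (posStep q2 (st, o) st) = cs
    rw [e3]
    show posL _ q4 (posStep q3 (o, cs) o) = cs
    rw [e4]
    show posL _ q5 (posStep q4 (o', o) cs) = cs
    rw [e5]
    show posL [] q6 (posStep q5 (o, st) cs) = cs
    rw [e6]
    rfl

lemma midF_spec (Y s g1 g2 : ℤ) (σ : Config 2)
    (hg1 : g1 = s + 1 ∨ g1 = s - 1) (hg2 : g2 = s + 1 ∨ g2 = s - 1)
    (hst : σ (P2 (Y-1) s) = true) (ho : σ (P2 Y s) = false)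
    (hcs : σ (P2 (Y+1) s) = false) (hb1 : σ (P2 (Y+1) g1) = false)
    (haw : σ (P2 (Y-1) g2) = false) :
    ValidL σ (midF Y s) ∧ applyL (midF Y s) σ = swap σ (P2 (Y-1) s) (P2 (Y+1) s) ∧
    posL (midF Y s) σ (P2 (Y-1) s) = P2 (Y+1) s := by
  have n1 : (Y:ℤ) - 1 ≠ Y + 1 := by omega
  have n2 : (Y:ℤ) - 1 ≠ Y := by omega
  have n3 : (Y:ℤ) ≠ Y + 1 := by omega
  have n4 : s ≠ g1 := by rcases hg1 with h | h <;> omega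
  have n5 : s ≠ g2 := by rcases hg2 with h | h <;> omega
  set st := P2 (Y-1) s with hstd
  set aw := P2 (Y-1) g2 with hawd
  set o := P2 Y s with hod
  set o' := P2 Y g1 with ho'd
  set cs := P2 (Y+1) s with hcsd
  set b1 := P2 (Y+1) g1 with hb1d
  have d1 : st ≠ o := P2_ne_fst n2
  have d3 : st ≠ cs := P2_ne_fst n1
  have d5 : st ≠ aw := P2_ne_snd n5
  have d7 : o ≠ cs := P2_ne_fst n3
  have d8 : o ≠ b1 := P2_ne_fst n3
  have d9 : o ≠ aw := P2_ne_fst (Ne.symm n2)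
  have d13 : cs ≠ b1 := P2_ne_snd n4
  have d14 : cs ≠ aw := P2_ne_fst (Ne.symm n1)
  set q1 := swap σ st o with hq1
  set q2 := swap q1 o cs with hq2
  have q1st : q1 st = false := by rw [hq1, swap_fst]; exact ho
  have q1o : q1 o = true := by rw [hq1, swap_snd]; exact hst
  have q1cs : q1 cs = false := by rw [hq1, swap_other (Ne.symm d3) (Ne.symm d7)]; exact hcs
  have q1b1 : q1 b1 = false := by rw [hq1, swap_other (P2_ne_fst (Ne.symm n1)) (Ne.symm d8)]; exact hb1
  have q1aw : q1 aw = false := by rw [hq1, swap_other (Ne.symm d5) (Ne.symm d9)]; exact haw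
  refine ⟨?_, ?_, ?_⟩
  · refine ValidL.cons ?_ (ValidL.cons ?_ (ValidL.nil _))
    · right
      refine ⟨adj_horiz (by left; omega), ?_⟩
      exact constraint2_of (zx := aw) (zy := cs)
        (nb_vert hg2) (Ne.symm d9) haw
        (nb_horiz (by left; omega)) (Ne.symm d3) hcs
    · show OKpair q1 (o, cs)
      right
      refine ⟨adj_horiz (by left; omega), ?_⟩
      exact constraint2_of (zx := st) (zy := b1)
        (nb_horiz (by right; omega)) d3 q1st
        (nb_vert hg1) (Ne.symm d8) q1b1
  · have : applyL (midF Y s) σ = q2 := rfl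
    rw [this]
    funext z
    by_cases z1 : z = st
    · subst z1
      have l : q2 st = false := by rw [hq2, swap_other d1 d3]; exact q1st
      have r : swap σ st cs st = false := by rw [swap_fst]; exact hcs
      rw [l, r]
    by_cases z2 : z = o
    · subst z2
      have l : q2 o = false := by rw [hq2, swap_fst]; exact q1cs
      have r : swap σ st cs o = false := by rw [swap_other (Ne.symm d1) d7]; exact ho
      rw [l, r]
    by_cases z3 : z = cs
    · subst z3
      have l : q2 cs = true := by rw [hq2, swap_snd]; exact q1o
      have r : swap σ st cs cs = true := by rw [swap_snd]; exact hst
      rw [l, r]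
    · rw [hq2, swap_other z2 z3, hq1, swap_other z1 z2, swap_other z1 z3]
  · show posL (midF Y s) σ st = cs
    have e1 : posStep σ (st, o) st = o := by
      unfold posStep
      rw [if_pos ⟨hst, ho, rfl⟩]
    have e2 : posStep q1 (o, cs) o = cs := by
      unfold posStep
      rw [if_pos ⟨q1o, q1cs, rfl⟩]
    show posL _ q1 (posStep σ (st, o) st) = cs
    rw [e1]
    show posL [] q2 (posStep q1 (o, cs) o) = cs
    rw [e2]
    rfl

/-! ### the full jump-move schedule -/

def sched' (Y s d1 : ℤ) (n1 : ℕ) (d2 : ℤ) (n2 : ℕ) (r w : ℤ) (flag : Bool) : Pairs2 :=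
  slideL (Y+1) (s+d1) d1 n1 ++ (slideL (Y-1) (s+d2) d2 n2 ++
  ((if flag then midT Y s (s+d1) else midF Y s) ++
  (slideL (Y-1) w (-d2) n2 ++ slideL (Y+1) r (-d1) n1)))

lemma sched'_length (Y s d1 : ℤ) (n1 : ℕ) (d2 : ℤ) (n2 : ℕ) (r w : ℤ) (flag : Bool) :
    (sched' Y s d1 n1 d2 n2 r w flag).length ≤ 2 * n1 + 2 * n2 + 6 := by
  have h6 : (if flag then midT Y s (s+d1) else midF Y s).length ≤ 6 := by
    cases flag <;> simp [midT, midF]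
  simp only [sched', List.length_append, slideL_length]
  omega

lemma posL_slide_offcol {X g d : ℤ} {n : ℕ} {z : Site 2} (hz : z 0 ≠ X) (σ : Config 2) :
    posL (slideL X g d n) σ z = z := by
  apply posL_notMem
  intro p hp
  obtain ⟨i, hi, e1, e2⟩ := slideL_mem hp
  constructor
  · intro hc; apply hz; rw [hc, e1]; rfl
  · intro hc; apply hz; rw [hc, e2]; rfl

lemma posL_slide_offrow {X g d : ℤ} {n : ℕ} {z : Site 2}
    (hz : ∀ i : ℕ, i ≤ n → z 1 ≠ g + i * d) (σ : Config 2) :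
    posL (slideL X g d n) σ z = z := by
  apply posL_notMem
  intro p hp
  obtain ⟨i, hi, e1, e2⟩ := slideL_mem hp
  constructor
  · intro hc; exact hz i (by omega) (by rw [hc, e1]; rfl)
  · intro hc; exact hz (i+1) (by omega) (by rw [hc, e2]; rfl)

lemma run_spec (Y lo hi s d1 d2 : ℤ) (n1 n2 : ℕ) (r w : ℤ) (η : Config 2)
    (hd1 : d1 = 1 ∨ d1 = -1) (hd2 : d2 = 1 ∨ d2 = -1)
    (hr : r = s + d1 + n1 * d1) (hw : w = s + d2 + n2 * d2)
    (hlos : lo ≤ s) (hshi : s ≤ hi) (hlor : lo ≤ r) (hrhi : r ≤ hi)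
    (hlow : lo ≤ w) (hwhi : w ≤ hi)
    (hcol0 : ∀ m : ℤ, lo ≤ m → m ≤ hi → η (P2 Y m) = false)
    (hstar : η (P2 (Y-1) s) = true)
    (hwhole : η (P2 (Y-1) w) = false)
    (hwmin : ∀ m : ℤ, (s < m ∧ m < w) ∨ (w < m ∧ m < s) → η (P2 (Y-1) m) = true)
    (hrhole : η (P2 (Y+1) r) = false)
    (hrmin : ∀ m : ℤ, (s < m ∧ m < r) ∨ (r < m ∧ m < s) → η (P2 (Y+1) m) = true) :
    ValidL η (sched' Y s d1 n1 d2 n2 r w (η (P2 (Y+1) s))) ∧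
    applyL (sched' Y s d1 n1 d2 n2 r w (η (P2 (Y+1) s))) η
      = swap η (P2 (Y-1) s) (P2 (Y+1) s) ∧
    posL (sched' Y s d1 n1 d2 n2 r w (η (P2 (Y+1) s))) η (P2 (Y-1) s) = P2 (Y+1) s := by
  -- arithmetic facts
  have hg1pm : s + d1 = s + 1 ∨ s + d1 = s - 1 := by
    rcases hd1 with h | h <;> subst h <;> [left; right] <;> ring
  have hg2pm : s + d2 = s + 1 ∨ s + d2 = s - 1 := by
    rcases hd2 with h | h <;> subst h <;> [left; right] <;> ring
  have hmd1 : -d1 = 1 ∨ -d1 = -1 := by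
    rcases hd1 with h | h <;> subst h <;> [right; left] <;> ring
  have hmd2 : -d2 = 1 ∨ -d2 = -1 := by
    rcases hd2 with h | h <;> subst h <;> [right; left] <;> ring
  have har : (s + d1) + (n1 : ℤ) * d1 = r := by rcases hd1 with h | h <;> subst h <;> omega
  have haw' : (s + d2) + (n2 : ℤ) * d2 = w := by rcases hd2 with h | h <;> subst h <;> omega
  have hrend : r + (n1 : ℤ) * (-d1) = s + d1 := by rcases hd1 with h | h <;> subst h <;> omega
  have hwend : w + (n2 : ℤ) * (-d2) = s + d2 := by rcases hd2 with h | h <;> subst h <;> omega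
  have harow : ∀ i : ℕ, i ≤ n1 → lo ≤ (s+d1) + i*d1 ∧ (s+d1) + i*d1 ≤ hi := by
    intro i hi; rcases hd1 with h | h <;> subst h <;> omega
  have hbrow : ∀ i : ℕ, i ≤ n2 → lo ≤ (s+d2) + i*d2 ∧ (s+d2) + i*d2 ≤ hi := by
    intro i hi; rcases hd2 with h | h <;> subst h <;> omega
  have hne1 : ∀ i : ℕ, i ≤ n1 → (s+d1) + i*d1 ≠ s := by
    intro i hi; rcases hd1 with h | h <;> subst h <;> omega
  have hne2 : ∀ i : ℕ, i ≤ n2 → (s+d2) + i*d2 ≠ s := by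
    intro i hi; rcases hd2 with h | h <;> subst h <;> omega
  have hbet1 : ∀ i : ℕ, i < n1 →
      (s < (s+d1)+i*d1 ∧ (s+d1)+i*d1 < r) ∨ (r < (s+d1)+i*d1 ∧ (s+d1)+i*d1 < s) := by
    intro i hi; rcases hd1 with h | h <;> subst h <;> omega
  have hbet2 : ∀ i : ℕ, i < n2 →
      (s < (s+d2)+i*d2 ∧ (s+d2)+i*d2 < w) ∨ (w < (s+d2)+i*d2 ∧ (s+d2)+i*d2 < s) := by
    intro i hi; rcases hd2 with h | h <;> subst h <;> omega
  have hne4 : ∀ i : ℕ, i ≤ n1 → r + i*(-d1) ≠ s := by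
    intro i hi; rcases hd1 with h | h <;> subst h <;> omega
  have hne3 : ∀ i : ℕ, i ≤ n2 → w + i*(-d2) ≠ s := by
    intro i hi; rcases hd2 with h | h <;> subst h <;> omega
  have hbnd4 : ∀ i : ℕ, i ≤ n1 → lo ≤ r + i*(-d1) ∧ r + i*(-d1) ≤ hi := by
    intro i hi; rcases hd1 with h | h <;> subst h <;> omega
  have hbnd3 : ∀ i : ℕ, i ≤ n2 → lo ≤ w + i*(-d2) ∧ w + i*(-d2) ≤ hi := by
    intro i hi; rcases hd2 with h | h <;> subst h <;> omega
  have hbet4 : ∀ i : ℕ, 1 ≤ i → i ≤ n1 →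
      (s < r + i*(-d1) ∧ r + i*(-d1) < r) ∨ (r < r + i*(-d1) ∧ r + i*(-d1) < s) := by
    intro i h1 h2; rcases hd1 with h | h <;> subst h <;> omega
  have hbet3 : ∀ i : ℕ, 1 ≤ i → i ≤ n2 →
      (s < w + i*(-d2) ∧ w + i*(-d2) < w) ∨ (w < w + i*(-d2) ∧ w + i*(-d2) < s) := by
    intro i h1 h2; rcases hd2 with h | h <;> subst h <;> omega
  have htrans4 : ∀ i : ℕ, i < n1 → ∃ j : ℕ, 1 ≤ j ∧ j ≤ n1 ∧ r + i*(-d1) = (s+d1) + j*d1 := by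
    intro i hi
    refine ⟨n1 - i, by omega, by omega, ?_⟩
    rcases hd1 with h | h <;> subst h <;> push_cast <;> omega
  have htrans3 : ∀ i : ℕ, i < n2 → ∃ j : ℕ, 1 ≤ j ∧ j ≤ n2 ∧ w + i*(-d2) = (s+d2) + j*d2 := by
    intro i hi
    refine ⟨n2 - i, by omega, by omega, ?_⟩
    rcases hd2 with h | h <;> subst h <;> push_cast <;> omega
  have hsetA : ∀ i : ℕ, i ≤ n1 → ∃ j : ℕ, j ≤ n1 ∧ (s+d1) + i*d1 = r + j*(-d1) := by
    intro i hi
    refine ⟨n1 - i, by omega, ?_⟩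
    rcases hd1 with h | h <;> subst h <;> push_cast <;> omega
  have hsetB : ∀ i : ℕ, i ≤ n2 → ∃ j : ℕ, j ≤ n2 ∧ (s+d2) + i*d2 = w + j*(-d2) := by
    intro i hi
    refine ⟨n2 - i, by omega, ?_⟩
    rcases hd2 with h | h <;> subst h <;> push_cast <;> omega
  have hsd1ne : s + d1 ≠ s := by rcases hd1 with h | h <;> subst h <;> omega
  have hsd2ne : s + d2 ≠ s := by rcases hd2 with h | h <;> subst h <;> omega
  have hY1 : (Y:ℤ) - 1 ≠ Y + 1 := by omega
  have hY2 : (Y:ℤ) - 1 ≠ Y := by omega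
  have hY3 : (Y:ℤ) ≠ Y + 1 := by omega
  set st := P2 (Y-1) s with hstd
  set cs := P2 (Y+1) s with hcsd
  set L1 := slideL (Y+1) (s+d1) d1 n1 with hL1
  set L2 := slideL (Y-1) (s+d2) d2 n2 with hL2
  set LM := (if η cs then midT Y s (s+d1) else midF Y s) with hLM
  set L3 := slideL (Y-1) w (-d2) n2 with hL3
  set L4 := slideL (Y+1) r (-d1) n1 with hL4
  -- block 1
  obtain ⟨vA, offA, endA, pathA⟩ :=
    slide_spec (Y+1) Y (Or.inr (by ring)) (s+d1) d1 hd1 n1 η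
      (fun i hi => hcol0 _ (harow i hi).1 (harow i hi).2)
      (by rw [har]; exact hrhole)
      (fun i hi => hrmin _ (hbet1 i hi))
  set σ1 := applyL L1 η with hσ1
  have hσ1col0 : ∀ m : ℤ, lo ≤ m → m ≤ hi → σ1 (P2 Y m) = false := by
    intro m h1 h2
    rw [offA (P2 Y m) fun i hi => P2_ne_fst (by omega)]
    exact hcol0 m h1 h2
  have hσ1colm : ∀ m : ℤ, σ1 (P2 (Y-1) m) = η (P2 (Y-1) m) := by
    intro m
    exact offA (P2 (Y-1) m) fun i hi => P2_ne_fst (by omega)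
  have hσ1cs : σ1 cs = η cs := by
    rw [hcsd]
    exact offA (P2 (Y+1) s) fun i hi => P2_ne_snd fun hc => hne1 i hi hc.symm
  have hσ1b1 : σ1 (P2 (Y+1) (s+d1)) = false := endA
  have hσ1path : ∀ i : ℕ, 1 ≤ i → i ≤ n1 → σ1 (P2 (Y+1) ((s+d1) + i*d1)) = true := by
    intro i h1 h2; exact pathA i h1 h2
  -- block 2
  obtain ⟨vB, offB, endB, pathB⟩ :=
    slide_spec (Y-1) Y (Or.inl (by ring)) (s+d2) d2 hd2 n2 σ1
      (fun i hi => hσ1col0 _ (hbrow i hi).1 (hbrow i hi).2)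
      (by rw [haw', hσ1colm]; exact hwhole)
      (fun i hi => by rw [hσ1colm]; exact hwmin _ (hbet2 i hi))
  set σ2 := applyL L2 σ1 with hσ2
  have hσ2col0 : ∀ m : ℤ, lo ≤ m → m ≤ hi → σ2 (P2 Y m) = false := by
    intro m h1 h2
    rw [offB (P2 Y m) fun i hi => P2_ne_fst (by omega)]
    exact hσ1col0 m h1 h2
  have hσ2colp : ∀ m : ℤ, σ2 (P2 (Y+1) m) = σ1 (P2 (Y+1) m) := by
    intro m
    exact offB (P2 (Y+1) m) fun i hi => P2_ne_fst (by omega)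
  have hσ2st : σ2 st = true := by
    rw [hstd, offB (P2 (Y-1) s) fun i hi => P2_ne_snd fun hc => hne2 i hi hc.symm,
      hσ1colm, ← hstd]
    exact hstar
  have hσ2cs : σ2 cs = η cs := by rw [hcsd, hσ2colp, ← hcsd, hσ1cs]
  have hσ2b1 : σ2 (P2 (Y+1) (s+d1)) = false := by rw [hσ2colp]; exact hσ1b1
  have hσ2o : σ2 (P2 Y s) = false := hσ2col0 s hlos hshi
  have hσ2o' : σ2 (P2 Y (s+d1)) = false :=
    hσ2col0 _ (by rcases hd1 with h | h <;> subst h <;> omega)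
      (by rcases hd1 with h | h <;> subst h <;> omega)
  have hσ2aw : σ2 (P2 (Y-1) (s+d2)) = false := endB
  have hσ2pathm : ∀ i : ℕ, 1 ≤ i → i ≤ n2 → σ2 (P2 (Y-1) ((s+d2) + i*d2)) = true := by
    intro i h1 h2; exact pathB i h1 h2
  have hσ2pathp : ∀ i : ℕ, 1 ≤ i → i ≤ n1 → σ2 (P2 (Y+1) ((s+d1) + i*d1)) = true := by
    intro i h1 h2; rw [hσ2colp]; exact hσ1path i h1 h2
  -- middle block
  have hMid : ValidL σ2 LM ∧ (∀ z : Site 2, z ≠ st → z ≠ cs → applyL LM σ2 z = σ2 z) ∧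
      applyL LM σ2 st = η cs ∧ applyL LM σ2 cs = η st ∧ posL LM σ2 st = cs := by
    rw [hLM]
    cases hflag : η cs with
    | true =>
        have hcs2 : σ2 cs = true := hσ2cs.trans hflag
        obtain ⟨mv, meff, mpos⟩ := midT_spec Y s (s+d1) (s+d2) σ2 hg1pm hg2pm
          hσ2st hσ2o hσ2o' hcs2 hσ2b1 hσ2aw
        rw [if_pos rfl]
        refine ⟨mv, fun z _ _ => by rw [meff], ?_, ?_, mpos⟩
        · rw [meff]; exact hσ2st
        · rw [meff, hcs2]; exact hstar.symm
    | false =>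
        have hcs2 : σ2 cs = false := hσ2cs.trans hflag
        obtain ⟨mv, meff, mpos⟩ := midF_spec Y s (s+d1) (s+d2) σ2 hg1pm hg2pm
          hσ2st hσ2o hcs2 hσ2b1 hσ2aw
        rw [if_neg (by simp)]
        refine ⟨mv, ?_, ?_, ?_, mpos⟩
        · intro z h1 h2
          rw [meff, ← hstd, ← hcsd, swap_other h1 h2]
        · rw [meff, ← hstd, ← hcsd, swap_fst]; exact hcs2
        · rw [meff, ← hstd, ← hcsd, swap_snd, hσ2st]; exact hstar.symm
  obtain ⟨vM, offM, hMst, hMcs, posM⟩ := hMid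
  set σ3 := applyL LM σ2 with hσ3
  have hσ3col0 : ∀ m : ℤ, lo ≤ m → m ≤ hi → σ3 (P2 Y m) = false := by
    intro m h1 h2
    rw [offM (P2 Y m) (P2_ne_fst (Ne.symm hY2)) (P2_ne_fst hY3)]
    exact hσ2col0 m h1 h2
  -- block 3
  obtain ⟨vC, offC, endC, pathC⟩ :=
    slide_spec (Y-1) Y (Or.inl (by ring)) w (-d2) hmd2 n2 σ3
      (fun i hi => hσ3col0 _ (hbnd3 i hi).1 (hbnd3 i hi).2)
      (by
        rw [hwend, offM (P2 (Y-1) (s+d2)) (P2_ne_snd hsd2ne) (P2_ne_fst hY1)]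
        exact hσ2aw)
      (fun i hi => by
        obtain ⟨j, hj1, hj2, hje⟩ := htrans3 i hi
        rw [hje, offM (P2 (Y-1) (s+d2+(j:ℤ)*d2)) (P2_ne_snd (hne2 j hj2)) (P2_ne_fst hY1)]
        exact hσ2pathm j hj1 hj2)
  set σ4 := applyL L3 σ3 with hσ4
  have hσ4col0 : ∀ m : ℤ, lo ≤ m → m ≤ hi → σ4 (P2 Y m) = false := by
    intro m h1 h2
    rw [offC (P2 Y m) fun i hi => P2_ne_fst (by omega)]
    exact hσ3col0 m h1 h2
  have hσ4colp : ∀ m : ℤ, σ4 (P2 (Y+1) m) = σ3 (P2 (Y+1) m) := by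
    intro m
    exact offC (P2 (Y+1) m) fun i hi => P2_ne_fst (by omega)
  -- block 4
  obtain ⟨vD, offD, endD, pathD⟩ :=
    slide_spec (Y+1) Y (Or.inr (by ring)) r (-d1) hmd1 n1 σ4
      (fun i hi => hσ4col0 _ (hbnd4 i hi).1 (hbnd4 i hi).2)
      (by
        rw [hrend, hσ4colp, offM (P2 (Y+1) (s+d1)) (P2_ne_fst (Ne.symm hY1)) (P2_ne_snd hsd1ne)]
        exact hσ2b1)
      (fun i hi => by
        obtain ⟨j, hj1, hj2, hje⟩ := htrans4 i hi
        rw [hje, hσ4colp, offM (P2 (Y+1) (s+d1+(j:ℤ)*d1)) (P2_ne_fst (Ne.symm hY1)) (P2_ne_snd (hne1 j hj2))]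
        exact hσ2pathp j hj1 hj2)
  set σ5 := applyL L4 σ4 with hσ5
  have hsched : sched' Y s d1 n1 d2 n2 r w (η cs) = L1 ++ (L2 ++ (LM ++ (L3 ++ L4))) := rfl
  refine ⟨?_, ?_, ?_⟩
  · show ValidL η (sched' Y s d1 n1 d2 n2 r w (η cs))
    rw [hsched]
    refine validL_append ?_ ?_
    · rw [hL1]; exact vA
    rw [← hσ1]
    refine validL_append ?_ ?_
    · rw [hL2]; exact vB
    rw [← hσ2]
    refine validL_append vM ?_
    rw [← hσ3]
    refine validL_append ?_ ?_
    · rw [hL3]; exact vC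
    rw [← hσ4, hL4]
    exact vD
  · show applyL (sched' Y s d1 n1 d2 n2 r w (η cs)) η = swap η st cs
    rw [hsched]
    simp only [applyL_append]
    rw [← hσ1, ← hσ2, ← hσ3, ← hσ4, ← hσ5]
    funext z
    by_cases hz1 : ∃ i : ℕ, i ≤ n1 ∧ z = P2 (Y+1) (r + i*(-d1))
    · obtain ⟨i, hi, rfl⟩ := hz1
      rw [swap_other (P2_ne_fst (Ne.symm hY1)) (P2_ne_snd (hne4 i hi))]
      by_cases hi0 : i = 0
      · subst hi0
        rw [show P2 (Y+1) (r + ((0:ℕ):ℤ)*(-d1)) = P2 (Y+1) r from by norm_num]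
        rw [endD]
        exact hrhole.symm
      · rw [pathD i (by omega) hi]
        exact (hrmin _ (hbet4 i (by omega) hi)).symm
    by_cases hz2 : ∃ i : ℕ, i ≤ n2 ∧ z = P2 (Y-1) (w + i*(-d2))
    · obtain ⟨i, hi, rfl⟩ := hz2
      rw [swap_other (P2_ne_snd (hne3 i hi)) (P2_ne_fst hY1)]
      have hoff5 : σ5 (P2 (Y-1) (w + i*(-d2))) = σ4 (P2 (Y-1) (w + i*(-d2))) :=
        offD (P2 (Y-1) (w + (i:ℤ)*(-d2))) fun j hj => P2_ne_fst (by omega)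
      rw [hoff5]
      by_cases hi0 : i = 0
      · subst hi0
        rw [show P2 (Y-1) (w + ((0:ℕ):ℤ)*(-d2)) = P2 (Y-1) w from by norm_num]
        rw [endC]
        exact hwhole.symm
      · rw [pathC i (by omega) hi]
        exact (hwmin _ (hbet3 i (by omega) hi)).symm
    by_cases hz3 : z = st
    · subst hz3
      have h5 : σ5 st = σ4 st := by
        rw [hstd]
        exact offD (P2 (Y-1) s) fun j hj => P2_ne_fst (by omega)
      have h4 : σ4 st = σ3 st := by
        rw [hstd]
        exact offC (P2 (Y-1) s) fun j hj => P2_ne_snd fun hc => hne3 j hj hc.symm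
      rw [h5, h4, hMst, swap_fst]
    by_cases hz4 : z = cs
    · subst hz4
      have h5 : σ5 cs = σ4 cs := by
        rw [hcsd]
        exact offD (P2 (Y+1) s) fun j hj => P2_ne_snd fun hc => hne4 j hj hc.symm
      have h4 : σ4 cs = σ3 cs := by
        rw [hcsd]
        exact offC (P2 (Y+1) s) fun j hj => P2_ne_fst (by omega)
      rw [h5, h4, hMcs, swap_snd]
    push_neg at hz1 hz2
    have h5 : σ5 z = σ4 z := offD z fun j hj => hz1 j hj
    have h4 : σ4 z = σ3 z := offC z fun j hj => hz2 j hj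
    have h3 : σ3 z = σ2 z := offM z hz3 hz4
    have h2 : σ2 z = σ1 z := by
      refine offB z fun i hi => ?_
      obtain ⟨j, hj, hje⟩ := hsetB i hi
      rw [hje]
      exact hz2 j hj
    have h1 : σ1 z = η z := by
      refine offA z fun i hi => ?_
      obtain ⟨j, hj, hje⟩ := hsetA i hi
      rw [hje]
      exact hz1 j hj
    rw [h5, h4, h3, h2, h1, swap_other hz3 hz4]
  · show posL (sched' Y s d1 n1 d2 n2 r w (η cs)) η st = cs
    rw [hsched]
    simp only [posL_append]
    rw [← hσ1, ← hσ2, ← hσ3, ← hσ4]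
    have p1 : posL L1 η st = st := by
      rw [hL1, hstd]
      exact posL_slide_offcol (by simp only [P2_zero]; omega) η
    have p2 : posL L2 σ1 st = st := by
      rw [hL2, hstd]
      refine posL_slide_offrow (fun i hi => ?_) σ1
      simp only [P2_one]
      exact fun hc => hne2 i hi hc.symm
    have p3 : posL L3 σ3 cs = cs := by
      rw [hL3, hcsd]
      exact posL_slide_offcol (by simp only [P2_zero]; omega) σ3
    have p4 : posL L4 σ4 cs = cs := by
      rw [hL4, hcsd]
      refine posL_slide_offrow (fun i hi => ?_) σ4
      simp only [P2_one]
      exact fun hc => hne4 i hi hc.symm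
    rw [p1, p2, posM, p3, p4]

/-! ### assembling the move -/

lemma posStep_self {σ : Config 2} {p : Site 2 × Site 2} (h : σ p.1 = σ p.2) (z : Site 2) :
    posStep σ p z = z := by
  unfold posStep
  have A : ¬(σ p.1 = true ∧ σ p.2 = false ∧ z = p.1) := by
    rintro ⟨h1, h2, -⟩; rw [h1, h2] at h; exact Bool.noConfusion h
  have B : ¬(σ p.2 = true ∧ σ p.1 = false ∧ z = p.2) := by
    rintro ⟨h1, h2, -⟩; rw [h1, h2] at h; exact Bool.noConfusion h
  rw [if_neg A, if_neg B]

lemma posStep_fire {σ : Config 2} {p : Site 2 × Site 2} (h1 : σ p.1 = true)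
    (h2 : σ p.2 = false) (z : Site 2) :
    posStep σ p z = if z = p.1 then p.2 else z := by
  unfold posStep
  by_cases hz : z = p.1
  · rw [if_pos ⟨h1, h2, hz⟩, if_pos hz]
  · rw [if_neg (fun hc => hz hc.2.2), if_neg (by rintro ⟨ha, hb, -⟩; rw [h1] at hb; exact Bool.noConfusion hb), if_neg hz]

lemma posStep_fire' {σ : Config 2} {p : Site 2 × Site 2} (h1 : σ p.2 = true)
    (h2 : σ p.1 = false) (z : Site 2) :
    posStep σ p z = if z = p.2 then p.1 else z := by
  unfold posStep
  by_cases hz : z = p.2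
  · rw [if_neg (by rintro ⟨ha, hb, -⟩; rw [h2] at ha; exact Bool.noConfusion ha), if_pos ⟨h1, h2, hz⟩, if_pos hz]
  · rw [if_neg (by rintro ⟨ha, hb, -⟩; rw [h2] at ha; exact Bool.noConfusion ha), if_neg (fun hc => hz hc.2.2), if_neg hz]

def mkSched (Y s : ℤ) (flag : Bool) (r w : ℤ) : Pairs2 :=
  sched' Y s (if s < r then 1 else -1) ((r - s).natAbs - 1)
            (if s < w then 1 else -1) ((w - s).natAbs - 1) r w flag

lemma mkSched_spec (Y lo hi s r w : ℤ) (η : Config 2)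
    (hlos : lo ≤ s) (hshi : s ≤ hi) (hlor : lo ≤ r) (hrhi : r ≤ hi)
    (hlow : lo ≤ w) (hwhi : w ≤ hi) (hrs : r ≠ s) (hws : w ≠ s)
    (hcol0 : ∀ m : ℤ, lo ≤ m → m ≤ hi → η (P2 Y m) = false)
    (hstar : η (P2 (Y-1) s) = true)
    (hwhole : η (P2 (Y-1) w) = false)
    (hwmin : ∀ m : ℤ, (s < m ∧ m < w) ∨ (w < m ∧ m < s) → η (P2 (Y-1) m) = true)
    (hrhole : η (P2 (Y+1) r) = false)
    (hrmin : ∀ m : ℤ, (s < m ∧ m < r) ∨ (r < m ∧ m < s) → η (P2 (Y+1) m) = true) :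
    ValidL η (mkSched Y s (η (P2 (Y+1) s)) r w) ∧
    applyL (mkSched Y s (η (P2 (Y+1) s)) r w) η = swap η (P2 (Y-1) s) (P2 (Y+1) s) ∧
    posL (mkSched Y s (η (P2 (Y+1) s)) r w) η (P2 (Y-1) s) = P2 (Y+1) s := by
  unfold mkSched
  refine run_spec Y lo hi s _ _ _ _ r w η ?_ ?_ ?_ ?_ hlos hshi hlor hrhi hlow hwhi
    hcol0 hstar hwhole hwmin hrhole hrmin
  · by_cases h : s < r <;> simp [h]
  · by_cases h : s < w <;> simp [h]
  · by_cases h : s < r <;> simp [h] <;> omega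
  · by_cases h : s < w <;> simp [h] <;> omega

lemma mkSched_length (Y s : ℤ) (flag : Bool) (r w lo hi : ℤ)
    (h1 : lo ≤ s) (h2 : s ≤ hi) (h3 : lo ≤ r) (h4 : r ≤ hi) (h5 : lo ≤ w) (h6 : w ≤ hi) :
    (mkSched Y s flag r w).length ≤ 4 * (hi - lo).toNat + 6 := by
  refine le_trans (sched'_length _ _ _ _ _ _ _ _ _) ?_
  omega

/-- (Jump move, `k = d = 2`.) A particle at `⋆` may hop over
an empty column, with `T ≤ C ℓ` and `Loss ≤ C log₂ ℓ`. -/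
theorem statement11 :
    ∃ C : ℝ, 0 < C ∧
      ∀ ℓ : ℕ, 2 ≤ ℓ → ∀ y star : Site 2, star ∈ col2 y (-1) ℓ →
        ∃ T : ℕ,
          ∃ mv : TStepMove 2 2
            {η | (∀ x ∈ col2 y 0 ℓ, η x = false) ∧
              (∃ x ∈ col2 y (-1) ℓ, x ≠ star ∧ η x = false) ∧
              TwoEmptyIn (col2 y 1 ℓ) η}
            Set.univ T,
            (T : ℝ) ≤ C * ℓ ∧
            LossBoundedBy mv (C * Real.logb 2 ℓ) ∧
            ∀ η : Config 2,
              ((∀ x ∈ col2 y 0 ℓ, η x = false) ∧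
                (∃ x ∈ col2 y (-1) ℓ, x ≠ star ∧ η x = false) ∧
                TwoEmptyIn (col2 y 1 ℓ) η) →
              η star = true →
                mv.conf η T = swap η star (star + (2 : ℤ) • eVec 2 0) ∧
                mv.pos η star T = star + (2 : ℤ) • eVec 2 0 := by
  refine ⟨20, by norm_num, ?_⟩
  intro ℓ hℓ y star hstarcol
  obtain ⟨hst0, hstlo, hsthi⟩ := hstarcol
  set Mset := {η : Config 2 | (∀ x ∈ col2 y 0 ℓ, η x = false) ∧
      (∃ x ∈ col2 y (-1) ℓ, x ≠ star ∧ η x = false) ∧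
      TwoEmptyIn (col2 y 1 ℓ) η} with hMset
  have hstareq : star = P2 (y 0 - 1) (star 1) := by
    funext i
    fin_cases i
    · show star 0 = y 0 - 1
      rw [hst0]; ring
    · rfl
  have hstar2 : star + (2:ℤ) • eVec 2 0 = P2 (y 0 + 1) (star 1) := by
    funext i
    fin_cases i
    · show star 0 + (2:ℤ) • eVec 2 0 0 = y 0 + 1
      rw [hst0]
      simp [eVec]
      ring
    · show star 1 + (2:ℤ) • eVec 2 0 1 = star 1
      simp [eVec]
  have hcol0 : ∀ η : Config 2, η ∈ Mset → ∀ m : ℤ, y 1 + 1 ≤ m → m ≤ y 1 + ℓ →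
      η (P2 (y 0) m) = false := by
    intro η hη m h1 h2
    exact hη.1 (P2 (y 0) m) ⟨by simp, h1, h2⟩
  have pick : ∀ η : Config 2, η ∈ Mset → η star = true →
      ∃ r w : ℤ,
        (y 1 + 1 ≤ r ∧ r ≤ y 1 + ℓ ∧ y 1 + 1 ≤ w ∧ w ≤ y 1 + ℓ ∧ r ≠ star 1 ∧ w ≠ star 1) ∧
        η (P2 (y 0 + 1) r) = false ∧
        (∀ m : ℤ, (star 1 < m ∧ m < r) ∨ (r < m ∧ m < star 1) → η (P2 (y 0 + 1) m) = true) ∧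
        η (P2 (y 0 - 1) w) = false ∧
        (∀ m : ℤ, (star 1 < m ∧ m < w) ∨ (w < m ∧ m < star 1) → η (P2 (y 0 - 1) m) = true) := by
    intro η hη hst
    obtain ⟨hcol, ⟨x, hxcol, hxne, hxf⟩, ⟨a, ha, b, hb, hab, haf, hbf⟩⟩ := hη
    have hxP : x = P2 (y 0 - 1) (x 1) := by
      funext i
      fin_cases i
      · show x 0 = y 0 - 1
        rw [hxcol.1]; ring
      · rfl
    have hWne : ((Finset.Icc (y 1 + 1) (y 1 + (ℓ:ℤ))).filter
        (fun m => η (P2 (y 0 - 1) m) = false)).Nonempty :=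
      ⟨x 1, Finset.mem_filter.mpr ⟨Finset.mem_Icc.mpr ⟨hxcol.2.1, hxcol.2.2⟩,
        by rw [← hxP]; exact hxf⟩⟩
    obtain ⟨w, hwW, hwmin'⟩ := Finset.exists_min_image _ (fun m => (m - star 1).natAbs) hWne
    have hwIcc := Finset.mem_Icc.mp (Finset.mem_filter.mp hwW).1
    have hwhole : η (P2 (y 0 - 1) w) = false := (Finset.mem_filter.mp hwW).2
    have hws : w ≠ star 1 := by
      intro hc
      rw [hc, ← hstareq, hst] at hwhole
      exact Bool.noConfusion hwhole
    have haP : a = P2 (y 0 + 1) (a 1) := by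
      funext i
      fin_cases i
      · show a 0 = y 0 + 1
        exact ha.1
      · rfl
    have hbP : b = P2 (y 0 + 1) (b 1) := by
      funext i
      fin_cases i
      · show b 0 = y 0 + 1
        exact hb.1
      · rfl
    have habne : a 1 ≠ b 1 := by
      intro hc
      apply hab
      rw [haP, hbP, hc]
    have hHne : (((Finset.Icc (y 1 + 1) (y 1 + (ℓ:ℤ))).filter
        (fun m => η (P2 (y 0 + 1) m) = false)).erase (star 1)).Nonempty := by
      by_cases has : a 1 = star 1
      · exact ⟨b 1, Finset.mem_erase.mpr ⟨by rw [← has]; exact fun hc => habne hc.symm,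
          Finset.mem_filter.mpr ⟨Finset.mem_Icc.mpr ⟨hb.2.1, hb.2.2⟩,
            by rw [← hbP]; exact hbf⟩⟩⟩
      · exact ⟨a 1, Finset.mem_erase.mpr ⟨has,
          Finset.mem_filter.mpr ⟨Finset.mem_Icc.mpr ⟨ha.2.1, ha.2.2⟩,
            by rw [← haP]; exact haf⟩⟩⟩
    obtain ⟨r, hrW, hrmin'⟩ := Finset.exists_min_image _ (fun m => (m - star 1).natAbs) hHne
    have hrs : r ≠ star 1 := (Finset.mem_erase.mp hrW).1
    have hrmem := Finset.mem_filter.mp (Finset.mem_erase.mp hrW).2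
    have hrIcc := Finset.mem_Icc.mp hrmem.1
    refine ⟨r, w, ⟨hrIcc.1, hrIcc.2, hwIcc.1, hwIcc.2, hrs, hws⟩, hrmem.2, ?_, hwhole, ?_⟩
    · intro m hm
      rcases Bool.eq_false_or_eq_true (η (P2 (y 0 + 1) m)) with h | h
      · exact h
      · exfalso
        have hmW := hrmin' m (Finset.mem_erase.mpr ⟨by omega,
          Finset.mem_filter.mpr ⟨Finset.mem_Icc.mpr ⟨by omega, by omega⟩, h⟩⟩)
        omega
    · intro m hm
      rcases Bool.eq_false_or_eq_true (η (P2 (y 0 - 1) m)) with h | h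
      · exact h
      · exfalso
        have hmW := hwmin' m
          (Finset.mem_filter.mpr ⟨Finset.mem_Icc.mpr ⟨by omega, by omega⟩, h⟩)
        omega
  classical
  set Sch : Config 2 → Pairs2 := fun η =>
    if h : η ∈ Mset ∧ η star = true then
      mkSched (y 0) (star 1) (η (P2 (y 0 + 1) (star 1)))
        (pick η h.1 h.2).choose (pick η h.1 h.2).choose_spec.choose
    else [] with hSchDef
  have SchSpec : ∀ η : Config 2, η ∈ Mset → η star = true →
      ValidL η (Sch η) ∧ (Sch η).length ≤ 4 * ℓ + 6 ∧
      applyL (Sch η) η = swap η star (P2 (y 0 + 1) (star 1)) ∧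
      posL (Sch η) η star = P2 (y 0 + 1) (star 1) ∧
      ∃ r w : ℤ, y 1 + 1 ≤ r ∧ r ≤ y 1 + ℓ ∧ y 1 + 1 ≤ w ∧ w ≤ y 1 + ℓ ∧
        Sch η = mkSched (y 0) (star 1) (η (P2 (y 0 + 1) (star 1))) r w := by
    intro η hη hst
    have hS : Sch η = mkSched (y 0) (star 1) (η (P2 (y 0 + 1) (star 1)))
        (pick η hη hst).choose (pick η hη hst).choose_spec.choose := by
      rw [hSchDef]
      exact dif_pos ⟨hη, hst⟩
    obtain ⟨⟨h1, h2, h3, h4, h5, h6⟩, hrhole, hrmin, hwhole, hwmin⟩ :=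
      (pick η hη hst).choose_spec.choose_spec
    have hstar' : η (P2 (y 0 - 1) (star 1)) = true := by rw [← hstareq]; exact hst
    obtain ⟨hv, happ, hpos⟩ := mkSched_spec (y 0) (y 1 + 1) (y 1 + ℓ) (star 1)
      (pick η hη hst).choose (pick η hη hst).choose_spec.choose η
      hstlo hsthi h1 h2 h3 h4 h5 h6 (hcol0 η hη) hstar' hwhole hwmin hrhole hrmin
    rw [hS]
    refine ⟨hv, ?_, ?_, ?_, (pick η hη hst).choose, (pick η hη hst).choose_spec.choose,
      h1, h2, h3, h4, rfl⟩
    · refine le_trans (mkSched_length _ _ _ _ _ _ _ hstlo hsthi h1 h2 h3 h4) ?_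
      omega
    · rw [show swap η star (P2 (y 0 + 1) (star 1))
          = swap η (P2 (y 0 - 1) (star 1)) (P2 (y 0 + 1) (star 1)) from by rw [← hstareq]]
      exact happ
    · rw [← hstareq] at hpos
      exact hpos
  refine ⟨4 * ℓ + 6,
    ⟨fun η t => applyL ((Sch η).take t) η, fun η z t => posL ((Sch η).take t) η z,
      fun η _ => rfl, fun η _ z _ => rfl, ?_⟩, ?_, ?_, ?_⟩
  · -- step
    intro η hη z hz t ht
    by_cases hst : η star = true
    · obtain ⟨hv, hlen, -, -, -⟩ := SchSpec η hη hst
      by_cases hlt : t < (Sch η).length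
      · have ok := validL_get hv t hlt
        have hconf := applyL_take_succ hlt η
        have hposeq := posL_take_succ hlt η z
        by_cases hval : applyL ((Sch η).take t) η ((Sch η).get ⟨t, hlt⟩).1
            = applyL ((Sch η).take t) η ((Sch η).get ⟨t, hlt⟩).2
        · left
          refine ⟨?_, ?_⟩
          · rw [hconf]
            exact swap_eq_self hval
          · rw [hposeq]
            exact posStep_self hval _
        · rcases ok with heq | ⟨hadj, hcon⟩
          · exact absurd heq hval
          right
          rcases Bool.eq_false_or_eq_true (applyL ((Sch η).take t) η ((Sch η).get ⟨t, hlt⟩).1)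
            with hv1 | hv1
          · have hv2 : applyL ((Sch η).take t) η ((Sch η).get ⟨t, hlt⟩).2 = false := by
              rcases Bool.eq_false_or_eq_true (applyL ((Sch η).take t) η
                ((Sch η).get ⟨t, hlt⟩).2) with h | h
              · exact absurd (hv1.trans h.symm) hval
              · exact h
            refine ⟨((Sch η).get ⟨t, hlt⟩).1, ((Sch η).get ⟨t, hlt⟩).2, hadj,
              Set.mem_univ _, Set.mem_univ _, hv1, hv2, hcon, ?_, ?_⟩
            · rw [hconf]
            · rw [hposeq, posStep_fire hv1 hv2]
          · have hv2 : applyL ((Sch η).take t) η ((Sch η).get ⟨t, hlt⟩).2 = true := by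
              rcases Bool.eq_false_or_eq_true (applyL ((Sch η).take t) η
                ((Sch η).get ⟨t, hlt⟩).2) with h | h
              · exact h
              · exact absurd (hv1.trans h.symm) hval
            refine ⟨((Sch η).get ⟨t, hlt⟩).2, ((Sch η).get ⟨t, hlt⟩).1, adj_symm2 hadj,
              Set.mem_univ _, Set.mem_univ _, hv2, hv1, constraint_symm2 hcon, ?_, ?_⟩
            · rw [hconf, swap_comm]
            · rw [hposeq, posStep_fire' hv2 hv1]
      · left
        have h1 : (Sch η).take (t + 1) = Sch η := List.take_of_length_le (by omega)
        have h2 : (Sch η).take t = Sch η := List.take_of_length_le (by omega)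
        rw [h1, h2]
        exact ⟨rfl, rfl⟩
    · left
      have hSe : Sch η = [] := by
        rw [hSchDef]
        exact dif_neg fun hc => hst hc.2
      rw [hSe]
      simp
  · -- T ≤ C ℓ
    have h2 : (2:ℝ) ≤ (ℓ:ℝ) := by exact_mod_cast hℓ
    push_cast
    linarith
  · -- loss bound
    intro t ht η' hη'
    set D : Finset (Bool × ℤ × ℤ) := (Finset.univ : Finset Bool) ×ˢ
      (Finset.Icc (y 1 + 1) (y 1 + (ℓ:ℤ)) ×ˢ Finset.Icc (y 1 + 1) (y 1 + (ℓ:ℤ))) with hD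
    set b0 : Config 2 := applyL ((Sch η').take t) η' with hb0
    refine ⟨insert b0 (D.image fun d =>
      applyL ((mkSched (y 0) (star 1) d.1 d.2.1 d.2.2).take t).reverse b0), ?_, ?_⟩
    · intro η hmem
      obtain ⟨hη, hc1, hc2⟩ := hmem
      dsimp only at hc1 hc2
      apply Finset.mem_coe.mpr
      by_cases hst : η star = true
      · obtain ⟨-, -, -, -, r, w, h1, h2, h3, h4, hSe⟩ := SchSpec η hη hst
        apply Finset.mem_insert_of_mem
        refine Finset.mem_image.mpr ⟨(η (P2 (y 0 + 1) (star 1)), r, w), ?_, ?_⟩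
        · exact Finset.mem_product.mpr ⟨Finset.mem_univ _,
            Finset.mem_product.mpr ⟨Finset.mem_Icc.mpr ⟨h1, h2⟩, Finset.mem_Icc.mpr ⟨h3, h4⟩⟩⟩
        · show applyL ((mkSched (y 0) (star 1) (η (P2 (y 0 + 1) (star 1))) r w).take t).reverse
              b0 = η
          rw [← hSe, hb0, ← hc1]
          exact applyL_reverse _ η
      · have hSe : Sch η = [] := by
          rw [hSchDef]
          exact dif_neg fun hc => hst hc.2
        have hηb : η = b0 := by
          rw [hb0, ← hc1]
          show η = applyL ((Sch η).take t) η
          rw [hSe]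
          simp
        rw [hηb]
        exact Finset.mem_insert_self _ _
    · have hIcard : (Finset.Icc (y 1 + 1) (y 1 + (ℓ:ℤ))).card = ℓ := by
        rw [Int.card_Icc]
        omega
      have hDcard : D.card = 2 * (ℓ * ℓ) := by
        rw [hD, Finset.card_product, Finset.card_product, hIcard]
        simp
      have hScard : (insert b0 (D.image fun d =>
          applyL ((mkSched (y 0) (star 1) d.1 d.2.1 d.2.2).take t).reverse b0)).card
          ≤ 1 + 2 * (ℓ * ℓ) := by
        refine le_trans (Finset.card_insert_le _ _) ?_
        have := Finset.card_image_le (s := D) (f := fun d =>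
          applyL ((mkSched (y 0) (star 1) d.1 d.2.1 d.2.2).take t).reverse b0)
        omega
      have hl2 : (2:ℝ) ≤ (ℓ:ℝ) := by exact_mod_cast hℓ
      have hlpos : (0:ℝ) < (ℓ:ℝ) := by linarith
      have hrpow : (2:ℝ) ^ (20 * Real.logb 2 (ℓ:ℝ)) = (ℓ:ℝ) ^ (20:ℕ) := by
        rw [mul_comm, Real.rpow_mul (by norm_num : (0:ℝ) ≤ 2),
          Real.rpow_logb (by norm_num) (by norm_num) hlpos,
          show ((20:ℝ)) = ((20:ℕ):ℝ) by norm_num, Real.rpow_natCast]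
      calc ((insert b0 (D.image fun d =>
            applyL ((mkSched (y 0) (star 1) d.1 d.2.1 d.2.2).take t).reverse b0)).card : ℝ)
          ≤ ((1 + 2 * (ℓ * ℓ) : ℕ) : ℝ) := by exact_mod_cast hScard
        _ ≤ (ℓ:ℝ) ^ (20:ℕ) := by
            push_cast
            have h4 : (1:ℝ) + 2 * (ℓ * ℓ) ≤ (ℓ:ℝ)^(4:ℕ) := by
              nlinarith [hl2, hlpos, sq_nonneg ((ℓ:ℝ)^2 - 2), sq_nonneg ((ℓ:ℝ) - 2)]
            have h20 : (ℓ:ℝ)^(4:ℕ) ≤ (ℓ:ℝ)^(20:ℕ) :=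
              pow_le_pow_right₀ (by linarith) (by norm_num)
            linarith
        _ = (2:ℝ) ^ (20 * Real.logb 2 (ℓ:ℝ)) := hrpow.symm
  · -- final configuration and position
    intro η hmem hst
    obtain ⟨hv, hlen, happ, hpos, -⟩ := SchSpec η hmem hst
    have htake : (Sch η).take (4 * ℓ + 6) = Sch η := List.take_of_length_le hlen
    constructor
    · show applyL ((Sch η).take (4 * ℓ + 6)) η = swap η star (star + (2:ℤ) • eVec 2 0)
      rw [htake, hstar2, happ]
    · show posL ((Sch η).take (4 * ℓ + 6)) η star = star + (2:ℤ) • eVec 2 0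
      rw [htake, hstar2, hpos]

end KA
end
end
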